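/- arXiv:2301.04863 — 4 statements merged into one kernel-verified Lean document; each statement's English description precedes it below -/
import Mathlib

section
/- Let μ be a probability measure on a measurable space X and let Φ¹, Φ² : X → [0,∞) be measurable functions in L¹_μ. Then d_KL(μ_{Φ¹} ‖ μ_{Φ²}) ≤ 2·exp(‖Φ¹‖_{L¹_μ} + ‖Φ¹ − Φ²‖_{L¹_μ})·‖Φ¹ − Φ²‖_{L¹_μ}, so μ_{Φ¹} is absolutely continuous with respect to μ_{Φ²}. In particular, max{d_KL(μ_{Φ¹} ‖ μ_{Φ²}), d_KL(μ_{Φ²} ‖ μ_{Φ¹})} ≤ 2·exp(2‖Φ¹‖_{L¹_μ} + 2‖Φ²‖_{L¹_μ})·‖Φ¹ − Φ²‖_{L¹_μ}, and μ_{Φ¹} and μ_{Φ²} are mutually equivalent. -/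
open MeasureTheory Real ENNReal
open scoped NNReal

open Classical in
/-- Kullback--Leibler divergence: `∫ log (dμ/dν) dμ` if `μ ≪ ν` (and the log-likelihood
ratio is integrable, in which case the value is finite), and `+∞` otherwise. -/
noncomputable def KLdiv {X : Type*} [MeasurableSpace X] (μ ν : Measure X) : ℝ≥0∞ :=
  if μ ≪ ν ∧ Integrable (fun x => Real.log ((μ.rnDeriv ν x).toReal)) μ
  then ENNReal.ofReal (∫ x, Real.log ((μ.rnDeriv ν x).toReal) ∂μ)
  else ⊤

/-- The measure `μ_Φ` with density `exp (-Φ) / Z` with respect to `μ`,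
where `Z = ∫ exp (-Φ) dμ`. -/
noncomputable def posterior {X : Type*} [MeasurableSpace X] (μ : Measure X) (Φ : X → ℝ) :
    Measure X :=
  μ.withDensity fun x => ENNReal.ofReal (Real.exp (-Φ x) / ∫ x', Real.exp (-Φ x') ∂μ)

lemma abs_exp_neg_sub {a b : ℝ} (ha : 0 ≤ a) (hb : 0 ≤ b) :
    |Real.exp (-a) - Real.exp (-b)| ≤ |a - b| := by
  have key : ∀ u v : ℝ, 0 ≤ u → 0 ≤ v → u ≤ v → Real.exp (-u) - Real.exp (-v) ≤ v - u := by
    intro u v hu hv huv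
    have h1 := Real.add_one_le_exp (u - v)
    have h2 : Real.exp (-u) ≤ 1 := Real.exp_le_one_iff.mpr (by linarith)
    have h3 : Real.exp (-v) = Real.exp (-u) * Real.exp (u - v) := by
      rw [← Real.exp_add]; ring_nf
    nlinarith [Real.exp_pos (-u), Real.exp_pos (u - v)]
  rcases le_total a b with h | h
  · rw [abs_of_nonneg (by linarith [Real.exp_le_exp.mpr (neg_le_neg h)]), abs_of_nonpos (by linarith)]
    simpa using key a b ha hb h
  · rw [abs_of_nonpos (by linarith [Real.exp_le_exp.mpr (neg_le_neg h)]), abs_of_nonneg (by linarith)]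
    simpa using key b a hb ha h

section Z
variable {X : Type*} [MeasurableSpace X] (μ : Measure X) [IsProbabilityMeasure μ]
variable {Φ : X → ℝ}

lemma integrable_expneg (hm : Measurable Φ) (h0 : ∀ x, 0 ≤ Φ x) :
    Integrable (fun x => Real.exp (-Φ x)) μ := by
  refine Integrable.mono' (integrable_const 1) ((hm.neg.exp).aestronglyMeasurable) ?_
  filter_upwards with x
  rw [Real.norm_eq_abs, abs_of_pos (Real.exp_pos _)]
  exact Real.exp_le_one_iff.mpr (by linarith [h0 x])

lemma exp_neg_integral_le (hm : Measurable Φ) (h0 : ∀ x, 0 ≤ Φ x) (hi : Integrable Φ μ) :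
    Real.exp (-∫ x, Φ x ∂μ) ≤ ∫ x, Real.exp (-Φ x) ∂μ := by
  set a := ∫ x, Φ x ∂μ
  have hle : ∀ x, Real.exp (-a) * (1 + (a - Φ x)) ≤ Real.exp (-Φ x) := by
    intro x
    have h1 := Real.add_one_le_exp (a - Φ x)
    have : Real.exp (-Φ x) = Real.exp (-a) * Real.exp (a - Φ x) := by
      rw [← Real.exp_add]; ring_nf
    nlinarith [Real.exp_pos (-a)]
  calc Real.exp (-a) = ∫ x, Real.exp (-a) * (1 + (a - Φ x)) ∂μ := by
        have he : (fun x => 1 + (a - Φ x)) = fun x => (1 + a) - Φ x := by funext x; ring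
        have : ∫ x, (1 + (a - Φ x)) ∂μ = 1 := by
          rw [he, integral_sub (integrable_const (1 + a)) hi]
          simp [a]
        rw [integral_const_mul, this, mul_one]
    _ ≤ ∫ x, Real.exp (-Φ x) ∂μ := by
        refine integral_mono ?_ (integrable_expneg μ hm h0) hle
        have he : (fun x => Real.exp (-a) * (1 + (a - Φ x)))
            = fun x => Real.exp (-a) * (1 + a) - Real.exp (-a) * Φ x := by funext x; ring
        rw [he]
        exact (integrable_const _).sub (hi.const_mul _)

lemma Zpos (hm : Measurable Φ) (h0 : ∀ x, 0 ≤ Φ x) (hi : Integrable Φ μ) :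
    0 < ∫ x, Real.exp (-Φ x) ∂μ :=
  lt_of_lt_of_le (Real.exp_pos _) (exp_neg_integral_le μ hm h0 hi)

lemma Zle1 (hm : Measurable Φ) (h0 : ∀ x, 0 ≤ Φ x) :
    ∫ x, Real.exp (-Φ x) ∂μ ≤ 1 := by
  calc ∫ x, Real.exp (-Φ x) ∂μ ≤ ∫ _x, (1:ℝ) ∂μ := by
        refine integral_mono (integrable_expneg μ hm h0) (integrable_const 1) fun x =>
          Real.exp_le_one_iff.mpr (by linarith [h0 x])
    _ = 1 := by simp

end Z

section Post
variable {X : Type*} [MeasurableSpace X] (μ : Measure X) [IsProbabilityMeasure μ]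
variable {Φ : X → ℝ}

lemma rho_meas (hm : Measurable Φ) :
    Measurable (fun x => ENNReal.ofReal (Real.exp (-Φ x) / ∫ x', Real.exp (-Φ x') ∂μ)) :=
  ((hm.neg.exp).div_const _).ennreal_ofReal

lemma rho_pos (hm : Measurable Φ) (h0 : ∀ x, 0 ≤ Φ x) (hi : Integrable Φ μ) (x : X) :
    0 < Real.exp (-Φ x) / ∫ x', Real.exp (-Φ x') ∂μ :=
  div_pos (Real.exp_pos _) (Zpos μ hm h0 hi)

lemma posterior_isProb (hm : Measurable Φ) (h0 : ∀ x, 0 ≤ Φ x) (hi : Integrable Φ μ) :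
    IsProbabilityMeasure (posterior μ Φ) := by
  constructor
  rw [posterior, withDensity_apply _ MeasurableSet.univ, Measure.restrict_univ,
    ← ofReal_integral_eq_lintegral_ofReal
      ((integrable_expneg μ hm h0).div_const _)
      (Filter.Eventually.of_forall fun x => (rho_pos μ hm h0 hi x).le)]
  rw [integral_div, div_self (Zpos μ hm h0 hi).ne']
  simp

lemma integral_posterior (hm : Measurable Φ) (h0 : ∀ x, 0 ≤ Φ x) (hi : Integrable Φ μ)
    (g : X → ℝ) :
    ∫ x, g x ∂(posterior μ Φ)
      = ∫ x, (Real.exp (-Φ x) / ∫ x', Real.exp (-Φ x') ∂μ) * g x ∂μ := by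
  set Z := ∫ x', Real.exp (-Φ x') ∂μ
  have hZ : 0 < Z := Zpos μ hm h0 hi
  have hcoe : (fun x => ENNReal.ofReal (Real.exp (-Φ x) / Z)) =
      fun x => (((Real.exp (-Φ x) / Z).toNNReal : ℝ≥0) : ℝ≥0∞) := rfl
  have hmeas : Measurable (fun x => Real.exp (-Φ x) / Z) := (hm.neg.exp).div_const _
  rw [posterior, hcoe, integral_withDensity_eq_integral_smul
    (Measurable.real_toNNReal hmeas) g]
  refine integral_congr_ae (Filter.Eventually.of_forall fun x => ?_)
  simp only [NNReal.smul_def, smul_eq_mul]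
  rw [Real.coe_toNNReal _ (div_nonneg (Real.exp_pos _).le hZ.le)]

lemma integrable_posterior_of (hm : Measurable Φ) (h0 : ∀ x, 0 ≤ Φ x) (hi : Integrable Φ μ)
    {g : X → ℝ} (hgm : Measurable g) (hgi : Integrable g μ) :
    Integrable g (posterior μ Φ) := by
  set Z := ∫ x', Real.exp (-Φ x') ∂μ
  have hZ : 0 < Z := Zpos μ hm h0 hi
  rw [posterior, integrable_withDensity_iff (rho_meas μ hm)
    (Filter.Eventually.of_forall fun x => ofReal_lt_top)]
  refine Integrable.mono' (hgi.abs.mul_const (1 / Z)) ?_ ?_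
  · exact (hgm.mul ((rho_meas μ hm).ennreal_toReal)).aestronglyMeasurable
  · filter_upwards with x
    rw [Real.norm_eq_abs, abs_mul, ENNReal.toReal_ofReal (rho_pos μ hm h0 hi x).le,
      abs_of_pos (rho_pos μ hm h0 hi x)]
    have h1 : Real.exp (-Φ x) / Z ≤ 1 / Z := by
      gcongr
      exact Real.exp_le_one_iff.mpr (by linarith [h0 x])
    exact mul_le_mul_of_nonneg_left h1 (abs_nonneg _)

end Post

lemma key {X : Type*} [MeasurableSpace X] (μ : Measure X) [IsProbabilityMeasure μ]
    (Φ₁ Φ₂ : X → ℝ) (hm1 : Measurable Φ₁) (hm2 : Measurable Φ₂)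
    (h01 : ∀ x, 0 ≤ Φ₁ x) (h02 : ∀ x, 0 ≤ Φ₂ x)
    (hi1 : Integrable Φ₁ μ) (hi2 : Integrable Φ₂ μ) :
    KLdiv (posterior μ Φ₁) (posterior μ Φ₂) ≤
      ENNReal.ofReal (2 * Real.exp ((∫ x, Φ₁ x ∂μ) + ∫ x, |Φ₁ x - Φ₂ x| ∂μ) *
        ∫ x, |Φ₁ x - Φ₂ x| ∂μ) ∧
    posterior μ Φ₁ ≪ posterior μ Φ₂ := by
  set Z₁ := ∫ x', Real.exp (-Φ₁ x') ∂μ with hZ₁def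
  set Z₂ := ∫ x', Real.exp (-Φ₂ x') ∂μ with hZ₂def
  set D := ∫ x, |Φ₁ x - Φ₂ x| ∂μ with hDdef
  set A := ∫ x, Φ₁ x ∂μ with hAdef
  have hZ₁ : 0 < Z₁ := Zpos μ hm1 h01 hi1
  have hZ₂ : 0 < Z₂ := Zpos μ hm2 h02 hi2
  have hZ₁le : Real.exp (-A) ≤ Z₁ := exp_neg_integral_le μ hm1 h01 hi1
  have habs : Integrable (fun x => |Φ₁ x - Φ₂ x|) μ := (hi1.sub hi2).abs
  have hD0 : 0 ≤ D := integral_nonneg fun x => abs_nonneg _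
  haveI hP1 : IsProbabilityMeasure (posterior μ Φ₁) := posterior_isProb μ hm1 h01 hi1
  haveI hP2 : IsProbabilityMeasure (posterior μ Φ₂) := posterior_isProb μ hm2 h02 hi2
  set g : X → ℝ≥0∞ :=
    fun x => ENNReal.ofReal ((Real.exp (-Φ₁ x) / Z₁) / (Real.exp (-Φ₂ x) / Z₂)) with hgdef
  have hrpos : ∀ x, 0 < (Real.exp (-Φ₁ x) / Z₁) / (Real.exp (-Φ₂ x) / Z₂) := fun x =>
    div_pos (rho_pos μ hm1 h01 hi1 x) (rho_pos μ hm2 h02 hi2 x)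
  have hgm : Measurable g :=
    (((hm1.neg.exp).div_const _).div ((hm2.neg.exp).div_const _)).ennreal_ofReal
  have hac : posterior μ Φ₁ ≪ posterior μ Φ₂ :=
    (withDensity_absolutelyContinuous μ _).trans
      (withDensity_absolutelyContinuous' (rho_meas μ hm2).aemeasurable
        (Filter.Eventually.of_forall fun x =>
          (ENNReal.ofReal_pos.mpr (rho_pos μ hm2 h02 hi2 x)).ne'))
  have heq : posterior μ Φ₁ = (posterior μ Φ₂).withDensity g := by
    rw [posterior, posterior, ← withDensity_mul μ (rho_meas μ hm2) hgm]
    congr 1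
    funext x
    simp only [Pi.mul_apply, hgdef]
    rw [← ENNReal.ofReal_mul (rho_pos μ hm2 h02 hi2 x).le, mul_comm,
      div_mul_cancel₀ _ (rho_pos μ hm2 h02 hi2 x).ne']
  have hrn : (posterior μ Φ₁).rnDeriv (posterior μ Φ₂) =ᵐ[posterior μ Φ₂] g := by
    rw [heq]; exact Measure.rnDeriv_withDensity _ hgm
  have hrn1 : (posterior μ Φ₁).rnDeriv (posterior μ Φ₂) =ᵐ[posterior μ Φ₁] g := hac.ae_eq hrn
  set L : X → ℝ := fun x => (Φ₂ x - Φ₁ x) + (Real.log Z₂ - Real.log Z₁) with hLdef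
  have hgL : ∀ x, Real.log ((g x).toReal) = L x := by
    intro x
    rw [hgdef, ENNReal.toReal_ofReal (hrpos x).le,
      Real.log_div (rho_pos μ hm1 h01 hi1 x).ne' (rho_pos μ hm2 h02 hi2 x).ne',
      Real.log_div (Real.exp_ne_zero _) hZ₁.ne', Real.log_div (Real.exp_ne_zero _) hZ₂.ne',
      Real.log_exp, Real.log_exp, hLdef]
    ring
  have hLae : (fun x => Real.log (((posterior μ Φ₁).rnDeriv (posterior μ Φ₂) x).toReal))
      =ᵐ[posterior μ Φ₁] L := by
    filter_upwards [hrn1] with x hx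
    rw [hx, hgL]
  have hI1 : Integrable Φ₁ (posterior μ Φ₁) := integrable_posterior_of μ hm1 h01 hi1 hm1 hi1
  have hI2 : Integrable Φ₂ (posterior μ Φ₁) := integrable_posterior_of μ hm1 h01 hi1 hm2 hi2
  have hIL : Integrable L (posterior μ Φ₁) := (hI2.sub hI1).add (integrable_const _)
  have hIlog : Integrable
      (fun x => Real.log (((posterior μ Φ₁).rnDeriv (posterior μ Φ₂) x).toReal))
      (posterior μ Φ₁) := hIL.congr hLae.symm
  -- bounds
  have hB1 : ∫ x, (Φ₂ x - Φ₁ x) ∂(posterior μ Φ₁) ≤ D / Z₁ := by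
    have s1 : ∫ x, (Φ₂ x - Φ₁ x) ∂(posterior μ Φ₁)
        ≤ ∫ x, |Φ₁ x - Φ₂ x| ∂(posterior μ Φ₁) := by
      refine integral_mono (hI2.sub hI1) (hI1.sub hI2).abs fun x => ?_
      rw [abs_sub_comm]; exact le_abs_self _
    have s2 : ∫ x, |Φ₁ x - Φ₂ x| ∂(posterior μ Φ₁)
        = ∫ x, (Real.exp (-Φ₁ x) / Z₁) * |Φ₁ x - Φ₂ x| ∂μ :=
      integral_posterior μ hm1 h01 hi1 _
    have s3 : ∫ x, (Real.exp (-Φ₁ x) / Z₁) * |Φ₁ x - Φ₂ x| ∂μ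
        ≤ ∫ x, (1 / Z₁) * |Φ₁ x - Φ₂ x| ∂μ := by
      refine integral_mono_of_nonneg
        (Filter.Eventually.of_forall fun x =>
          mul_nonneg (rho_pos μ hm1 h01 hi1 x).le (abs_nonneg _))
        (habs.const_mul _)
        (Filter.Eventually.of_forall fun x => ?_)
      have h1 : Real.exp (-Φ₁ x) / Z₁ ≤ 1 / Z₁ := by
        gcongr
        exact Real.exp_le_one_iff.mpr (by linarith [h01 x])
      exact mul_le_mul_of_nonneg_right h1 (abs_nonneg _)
    have s4 : ∫ x, (1 / Z₁) * |Φ₁ x - Φ₂ x| ∂μ = D / Z₁ := by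
      rw [integral_const_mul, one_div, inv_mul_eq_div, hDdef]
    linarith
  have hB2 : Real.log Z₂ - Real.log Z₁ ≤ D / Z₁ := by
    have hZd : Z₂ - Z₁ ≤ D := by
      have hpt : ∀ x, Real.exp (-Φ₂ x) - Real.exp (-Φ₁ x) ≤ |Φ₁ x - Φ₂ x| := by
        intro x
        calc Real.exp (-Φ₂ x) - Real.exp (-Φ₁ x)
            ≤ |Real.exp (-Φ₂ x) - Real.exp (-Φ₁ x)| := le_abs_self _
          _ ≤ |Φ₂ x - Φ₁ x| := abs_exp_neg_sub (h02 x) (h01 x)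
          _ = |Φ₁ x - Φ₂ x| := abs_sub_comm _ _
      calc Z₂ - Z₁ = ∫ x, (Real.exp (-Φ₂ x) - Real.exp (-Φ₁ x)) ∂μ :=
            (integral_sub (integrable_expneg μ hm2 h02) (integrable_expneg μ hm1 h01)).symm
        _ ≤ D := integral_mono
            ((integrable_expneg μ hm2 h02).sub (integrable_expneg μ hm1 h01)) habs hpt
    calc Real.log Z₂ - Real.log Z₁ = Real.log (Z₂ / Z₁) := (Real.log_div hZ₂.ne' hZ₁.ne').symm
      _ ≤ Z₂ / Z₁ - 1 := Real.log_le_sub_one_of_pos (div_pos hZ₂ hZ₁)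
      _ = (Z₂ - Z₁) / Z₁ := by field_simp
      _ ≤ D / Z₁ := by gcongr
  have hinv : 1 / Z₁ ≤ Real.exp (A + D) := by
    have h1 : 1 / Z₁ ≤ 1 / Real.exp (-A) :=
      one_div_le_one_div_of_le (Real.exp_pos _) hZ₁le
    have h2 : 1 / Real.exp (-A) = Real.exp A := by
      rw [Real.exp_neg, one_div, inv_inv]
    have h3 : Real.exp A ≤ Real.exp (A + D) := Real.exp_le_exp.mpr (by linarith)
    linarith
  have hint : ∫ x, Real.log (((posterior μ Φ₁).rnDeriv (posterior μ Φ₂) x).toReal)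
      ∂(posterior μ Φ₁) ≤ 2 * Real.exp (A + D) * D := by
    rw [integral_congr_ae hLae]
    have : ∫ x, L x ∂(posterior μ Φ₁)
        = (∫ x, (Φ₂ x - Φ₁ x) ∂(posterior μ Φ₁)) + (Real.log Z₂ - Real.log Z₁) := by
      have hsub : Integrable (fun x => Φ₂ x - Φ₁ x) (posterior μ Φ₁) := hI2.sub hI1
      rw [hLdef, integral_add hsub (integrable_const _), integral_const]
      simp
    rw [this]
    have hzz : D / Z₁ = (1 / Z₁) * D := by ring
    nlinarith [mul_le_mul_of_nonneg_right hinv hD0]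
  constructor
  · rw [KLdiv, if_pos ⟨hac, hIlog⟩]
    exact ENNReal.ofReal_le_ofReal hint
  · exact hac

theorem stmt0 {X : Type*} [MeasurableSpace X] (μ : Measure X) [IsProbabilityMeasure μ]
    (Φ₁ Φ₂ : X → ℝ) (hΦ₁m : Measurable Φ₁) (hΦ₂m : Measurable Φ₂)
    (hΦ₁0 : ∀ x, 0 ≤ Φ₁ x) (hΦ₂0 : ∀ x, 0 ≤ Φ₂ x)
    (hΦ₁i : Integrable Φ₁ μ) (hΦ₂i : Integrable Φ₂ μ) :
    KLdiv (posterior μ Φ₁) (posterior μ Φ₂) ≤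
      ENNReal.ofReal (2 * Real.exp ((∫ x, |Φ₁ x| ∂μ) + ∫ x, |Φ₁ x - Φ₂ x| ∂μ) *
        ∫ x, |Φ₁ x - Φ₂ x| ∂μ) ∧
    posterior μ Φ₁ ≪ posterior μ Φ₂ ∧
    max (KLdiv (posterior μ Φ₁) (posterior μ Φ₂)) (KLdiv (posterior μ Φ₂) (posterior μ Φ₁)) ≤
      ENNReal.ofReal (2 * Real.exp (2 * (∫ x, |Φ₁ x| ∂μ) + 2 * ∫ x, |Φ₂ x| ∂μ) *
        ∫ x, |Φ₁ x - Φ₂ x| ∂μ) ∧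
    posterior μ Φ₂ ≪ posterior μ Φ₁ := by
  have hA1 : (∫ x, |Φ₁ x| ∂μ) = ∫ x, Φ₁ x ∂μ :=
    integral_congr_ae (Filter.Eventually.of_forall fun x => abs_of_nonneg (hΦ₁0 x))
  have hA2 : (∫ x, |Φ₂ x| ∂μ) = ∫ x, Φ₂ x ∂μ :=
    integral_congr_ae (Filter.Eventually.of_forall fun x => abs_of_nonneg (hΦ₂0 x))
  have hDsym : (∫ x, |Φ₂ x - Φ₁ x| ∂μ) = ∫ x, |Φ₁ x - Φ₂ x| ∂μ :=
    integral_congr_ae (Filter.Eventually.of_forall fun x => abs_sub_comm _ _)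
  obtain ⟨hk1, hac12⟩ := key μ Φ₁ Φ₂ hΦ₁m hΦ₂m hΦ₁0 hΦ₂0 hΦ₁i hΦ₂i
  obtain ⟨hk2, hac21⟩ := key μ Φ₂ Φ₁ hΦ₂m hΦ₁m hΦ₂0 hΦ₁0 hΦ₂i hΦ₁i
  rw [hDsym] at hk2
  set D := ∫ x, |Φ₁ x - Φ₂ x| ∂μ with hDdef
  set A₁ := ∫ x, Φ₁ x ∂μ with hA1def
  set A₂ := ∫ x, Φ₂ x ∂μ with hA2def
  have hD0 : 0 ≤ D := integral_nonneg fun x => abs_nonneg _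
  have hA10 : 0 ≤ A₁ := integral_nonneg hΦ₁0
  have hA20 : 0 ≤ A₂ := integral_nonneg hΦ₂0
  have hD : D ≤ A₁ + A₂ := by
    have : ∀ x, |Φ₁ x - Φ₂ x| ≤ Φ₁ x + Φ₂ x := fun x => by
      have h := abs_sub (Φ₁ x) (Φ₂ x)
      rwa [abs_of_nonneg (hΦ₁0 x), abs_of_nonneg (hΦ₂0 x)] at h
    calc D ≤ ∫ x, (Φ₁ x + Φ₂ x) ∂μ :=
          integral_mono (hΦ₁i.sub hΦ₂i).abs (hΦ₁i.add hΦ₂i) this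
      _ = A₁ + A₂ := integral_add hΦ₁i hΦ₂i
  have hbnd : ∀ B : ℝ, B + D ≤ 2 * A₁ + 2 * A₂ →
      ENNReal.ofReal (2 * Real.exp (B + D) * D)
        ≤ ENNReal.ofReal (2 * Real.exp (2 * A₁ + 2 * A₂) * D) := by
    intro B hB
    refine ENNReal.ofReal_le_ofReal ?_
    have := Real.exp_le_exp.mpr hB
    nlinarith [Real.exp_pos (B + D)]
  refine ⟨by rw [hA1]; exact hk1, hac12, ?_, hac21⟩
  rw [hA1, hA2]
  exact max_le (hk1.trans (hbnd A₁ (by linarith))) (hk2.trans (hbnd A₂ (by linarith)))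
end

section
/- If the best misfit Φ^† and the approximate misfit Φ^a both belong to L¹_{μ_θ}, then ‖Φ^† − Φ^a‖_{L¹_{μ_θ}} ≤ 2^{−1/2} · ‖ |O δ^†|²_{Σ_η^{−1}} ‖_{L¹_{μ_θ}}^{1/2} · ( ‖Φ^†‖_{L¹_{μ_θ}}^{1/2} + ‖Φ^a‖_{L¹_{μ_θ}}^{1/2} ), where |O δ^†(θ)|²_{Σ_η^{−1}} denotes the squared Σ_η^{−1}-weighted Euclidean norm of the observed model error. -/
open MeasureTheory Real Matrix

section quad
variable {n : ℕ} {L : Matrix (Fin n) (Fin n) ℝ}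

lemma quad_nonneg' (hL : L.PosSemidef) (v : Fin n → ℝ) : 0 ≤ v ⬝ᵥ L *ᵥ v := by
  simpa using hL.re_dotProduct_nonneg v

lemma bilin_symm (hL : L.PosSemidef) (u v : Fin n → ℝ) :
    u ⬝ᵥ L *ᵥ v = v ⬝ᵥ L *ᵥ u := by
  have hLt : Lᵀ = L := by
    have := hL.1
    rwa [Matrix.IsHermitian, Matrix.conjTranspose_eq_transpose_of_trivial] at this
  rw [Matrix.dotProduct_mulVec, ← Matrix.mulVec_transpose, hLt, dotProduct_comm]

lemma quad_add (hL : L.PosSemidef) (u v : Fin n → ℝ) :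
    (u + v) ⬝ᵥ L *ᵥ (u + v) =
      u ⬝ᵥ L *ᵥ u + 2 * (u ⬝ᵥ L *ᵥ v) + v ⬝ᵥ L *ᵥ v := by
  rw [add_dotProduct, Matrix.mulVec_add, dotProduct_add, dotProduct_add, bilin_symm hL v u]
  ring

lemma quad_cs (hL : L.PosSemidef) (u v : Fin n → ℝ) :
    |u ⬝ᵥ L *ᵥ v| ≤ Real.sqrt (u ⬝ᵥ L *ᵥ u) * Real.sqrt (v ⬝ᵥ L *ᵥ v) := by
  have hdis : discrim (u ⬝ᵥ L *ᵥ u) (2 * (u ⬝ᵥ L *ᵥ v)) (v ⬝ᵥ L *ᵥ v) ≤ 0 := by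
    refine discrim_le_zero fun t => ?_
    have h0 : 0 ≤ (t • u + v) ⬝ᵥ L *ᵥ (t • u + v) := quad_nonneg' hL _
    simp only [Matrix.mulVec_add, Matrix.mulVec_smul, add_dotProduct, dotProduct_add,
      smul_dotProduct, dotProduct_smul, smul_eq_mul] at h0
    rw [bilin_symm hL v u] at h0
    nlinarith [h0]
  rw [discrim] at hdis
  have hsq : (u ⬝ᵥ L *ᵥ v) ^ 2 ≤ (u ⬝ᵥ L *ᵥ u) * (v ⬝ᵥ L *ᵥ v) := by nlinarith
  calc |u ⬝ᵥ L *ᵥ v| ≤ Real.sqrt ((u ⬝ᵥ L *ᵥ u) * (v ⬝ᵥ L *ᵥ v)) := Real.abs_le_sqrt hsq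
    _ = _ := Real.sqrt_mul (quad_nonneg' hL u) _

lemma quad_sqrt_add_le (hL : L.PosSemidef) (u v : Fin n → ℝ) :
    Real.sqrt ((u + v) ⬝ᵥ L *ᵥ (u + v)) ≤
      Real.sqrt (u ⬝ᵥ L *ᵥ u) + Real.sqrt (v ⬝ᵥ L *ᵥ v) := by
  have h1 : (u + v) ⬝ᵥ L *ᵥ (u + v) ≤
      (Real.sqrt (u ⬝ᵥ L *ᵥ u) + Real.sqrt (v ⬝ᵥ L *ᵥ v)) ^ 2 := by
    rw [quad_add hL]
    have h2 := (abs_le.mp (quad_cs hL u v)).2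
    have h3 : Real.sqrt (u ⬝ᵥ L *ᵥ u) ^ 2 = u ⬝ᵥ L *ᵥ u := Real.sq_sqrt (quad_nonneg' hL u)
    have h4 : Real.sqrt (v ⬝ᵥ L *ᵥ v) ^ 2 = v ⬝ᵥ L *ᵥ v := Real.sq_sqrt (quad_nonneg' hL v)
    nlinarith
  calc Real.sqrt ((u + v) ⬝ᵥ L *ᵥ (u + v)) ≤
      Real.sqrt ((Real.sqrt (u ⬝ᵥ L *ᵥ u) + Real.sqrt (v ⬝ᵥ L *ᵥ v)) ^ 2) :=
        Real.sqrt_le_sqrt h1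
    _ = _ := Real.sqrt_sq (by positivity)

lemma key_ineq (hL : L.PosSemidef) (a b : Fin n → ℝ) :
    |a ⬝ᵥ L *ᵥ a - b ⬝ᵥ L *ᵥ b| ≤
      Real.sqrt ((a - b) ⬝ᵥ L *ᵥ (a - b)) *
        (Real.sqrt (a ⬝ᵥ L *ᵥ a) + Real.sqrt (b ⬝ᵥ L *ᵥ b)) := by
  have hexp : a ⬝ᵥ L *ᵥ a - b ⬝ᵥ L *ᵥ b = (a - b) ⬝ᵥ L *ᵥ (a + b) := by
    rw [sub_dotProduct, Matrix.mulVec_add, dotProduct_add, dotProduct_add, bilin_symm hL a b]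
    ring
  rw [hexp]
  calc |(a - b) ⬝ᵥ L *ᵥ (a + b)| ≤
      Real.sqrt ((a - b) ⬝ᵥ L *ᵥ (a - b)) * Real.sqrt ((a + b) ⬝ᵥ L *ᵥ (a + b)) :=
        quad_cs hL _ _
    _ ≤ _ := mul_le_mul_of_nonneg_left (quad_sqrt_add_le hL a b) (Real.sqrt_nonneg _)

lemma quad_sub_le (hL : L.PosSemidef) (a b : Fin n → ℝ) :
    (a - b) ⬝ᵥ L *ᵥ (a - b) ≤ 2 * (a ⬝ᵥ L *ᵥ a) + 2 * (b ⬝ᵥ L *ᵥ b) := by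
  have h1 : Real.sqrt ((a - b) ⬝ᵥ L *ᵥ (a - b)) ≤
      Real.sqrt (a ⬝ᵥ L *ᵥ a) + Real.sqrt ((-b) ⬝ᵥ L *ᵥ (-b)) := by
    have := quad_sqrt_add_le hL a (-b)
    simpa [sub_eq_add_neg] using this
  have hnb : (-b) ⬝ᵥ L *ᵥ (-b) = b ⬝ᵥ L *ᵥ b := by
    rw [Matrix.mulVec_neg, neg_dotProduct, dotProduct_neg, neg_neg]
  rw [hnb] at h1
  have h3 : Real.sqrt (a ⬝ᵥ L *ᵥ a) ^ 2 = a ⬝ᵥ L *ᵥ a := Real.sq_sqrt (quad_nonneg' hL a)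
  have h4 : Real.sqrt (b ⬝ᵥ L *ᵥ b) ^ 2 = b ⬝ᵥ L *ᵥ b := Real.sq_sqrt (quad_nonneg' hL b)
  have h5 : 0 ≤ Real.sqrt ((a - b) ⬝ᵥ L *ᵥ (a - b)) := Real.sqrt_nonneg _
  have h6 : Real.sqrt ((a - b) ⬝ᵥ L *ᵥ (a - b)) ^ 2 = (a - b) ⬝ᵥ L *ᵥ (a - b) :=
    Real.sq_sqrt (quad_nonneg' hL _)
  have h7 := mul_le_mul h1 h1 h5 (by positivity)
  nlinarith [h7, sq_nonneg (Real.sqrt (a ⬝ᵥ L *ᵥ a) - Real.sqrt (b ⬝ᵥ L *ᵥ b)),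
    Real.sqrt_nonneg (a ⬝ᵥ L *ᵥ a), Real.sqrt_nonneg (b ⬝ᵥ L *ᵥ b)]

lemma quad_continuous (L : Matrix (Fin n) (Fin n) ℝ) :
    Continuous fun v : Fin n → ℝ => v ⬝ᵥ L *ᵥ v := by
  simp only [dotProduct, mulVec]
  fun_prop

end quad

lemma holder2 {X : Type*} [MeasurableSpace X] (μ : Measure X) {f g : X → ℝ}
    (hf0 : ∀ x, 0 ≤ f x) (hg0 : ∀ x, 0 ≤ g x)
    (hfm : AEStronglyMeasurable f μ) (hgm : AEStronglyMeasurable g μ)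
    (hf2 : Integrable (fun x => f x ^ 2) μ) (hg2 : Integrable (fun x => g x ^ 2) μ) :
    ∫ x, f x * g x ∂μ ≤ Real.sqrt (∫ x, f x ^ 2 ∂μ) * Real.sqrt (∫ x, g x ^ 2 ∂μ) := by
  have hpq : Real.HolderConjugate 2 2 := Real.holderConjugate_iff.mpr ⟨by norm_num, by norm_num⟩
  have hfM : MemLp f (ENNReal.ofReal 2) μ := by
    rw [show ENNReal.ofReal 2 = 2 by simp]
    exact (memLp_two_iff_integrable_sq hfm).mpr hf2
  have hgM : MemLp g (ENNReal.ofReal 2) μ := by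
    rw [show ENNReal.ofReal 2 = 2 by simp]
    exact (memLp_two_iff_integrable_sq hgm).mpr hg2
  have key := integral_mul_le_Lp_mul_Lq_of_nonneg hpq (ae_of_all _ hf0) (ae_of_all _ hg0) hfM hgM
  have hr : ∀ x : ℝ, x ^ (2:ℝ) = x ^ 2 := fun x => by
    rw [show (2:ℝ) = ((2:ℕ):ℝ) by norm_num, Real.rpow_natCast]
  simp only [hr] at key
  calc ∫ x, f x * g x ∂μ ≤ (∫ x, f x ^ 2 ∂μ) ^ (1/2:ℝ) * (∫ x, g x ^ 2 ∂μ) ^ (1/2:ℝ) := key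
    _ = _ := by rw [← Real.sqrt_eq_rpow, ← Real.sqrt_eq_rpow]

theorem stmt1 {X U : Type*} [MeasurableSpace X] [NormedAddCommGroup U] [NormedSpace ℝ U]
    [CompleteSpace U] [MeasurableSpace U] [BorelSpace U]
    (μ : Measure X) [IsProbabilityMeasure μ] {n : ℕ}
    (Mdag Mappr : X → U) (hMdag : Measurable Mdag) (hMappr : Measurable Mappr)
    (O : U →L[ℝ] (Fin n → ℝ)) (y : Fin n → ℝ)
    (Γ : Matrix (Fin n) (Fin n) ℝ) (hΓ : Γ.PosDef)
    (Φdag Φappr : X → ℝ)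
    (hΦdag : Φdag = fun θ => (1/2) * ((y - O (Mdag θ)) ⬝ᵥ (Γ⁻¹ *ᵥ (y - O (Mdag θ)))))
    (hΦappr : Φappr = fun θ => (1/2) * ((y - O (Mappr θ)) ⬝ᵥ (Γ⁻¹ *ᵥ (y - O (Mappr θ)))))
    (hid : Integrable Φdag μ) (hia : Integrable Φappr μ) :
    ∫ θ, |Φdag θ - Φappr θ| ∂μ ≤
      (Real.sqrt 2)⁻¹ *
        Real.sqrt (∫ θ, |(O (Mdag θ - Mappr θ)) ⬝ᵥ (Γ⁻¹ *ᵥ (O (Mdag θ - Mappr θ)))| ∂μ) *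
        (Real.sqrt (∫ θ, |Φdag θ| ∂μ) + Real.sqrt (∫ θ, |Φappr θ| ∂μ)) := by
  have hPS : (Γ⁻¹).PosSemidef := hΓ.inv.posSemidef
  set Q : (Fin n → ℝ) → ℝ := fun v => v ⬝ᵥ Γ⁻¹ *ᵥ v with hQ
  set a : X → (Fin n → ℝ) := fun θ => y - O (Mdag θ) with ha
  set b : X → (Fin n → ℝ) := fun θ => y - O (Mappr θ) with hb
  have hOd : ∀ θ, O (Mdag θ - Mappr θ) = b θ - a θ := by
    intro θ; simp [ha, hb, map_sub]
  -- basic facts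
  have hΦd : ∀ θ, Φdag θ = (1/2) * Q (a θ) := fun θ => by rw [hΦdag]
  have hΦa : ∀ θ, Φappr θ = (1/2) * Q (b θ) := fun θ => by rw [hΦappr]
  have hΦd0 : ∀ θ, 0 ≤ Φdag θ := fun θ => by
    rw [hΦd θ]; have := quad_nonneg' hPS (a θ); positivity
  have hΦa0 : ∀ θ, 0 ≤ Φappr θ := fun θ => by
    rw [hΦa θ]; have := quad_nonneg' hPS (b θ); positivity
  -- measurability
  have hOMd : Measurable fun θ => O (Mdag θ) := O.continuous.measurable.comp hMdag
  have hOMa : Measurable fun θ => O (Mappr θ) := O.continuous.measurable.comp hMappr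
  have ham : Measurable a := measurable_const.sub hOMd
  have hbm : Measurable b := measurable_const.sub hOMa
  have hcm : Measurable fun θ => b θ - a θ := hbm.sub ham
  have hQcm : Measurable fun θ => Q (b θ - a θ) := (quad_continuous Γ⁻¹).measurable.comp hcm
  -- functions
  set F : X → ℝ := fun θ => Real.sqrt (Q (b θ - a θ)) with hF
  set Gd : X → ℝ := fun θ => Real.sqrt (Φdag θ) with hGd
  set Ga : X → ℝ := fun θ => Real.sqrt (Φappr θ) with hGa
  have hFm : AEStronglyMeasurable F μ :=
    (Real.continuous_sqrt.measurable.comp hQcm).aestronglyMeasurable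
  have hGdm : AEStronglyMeasurable Gd μ :=
    Real.continuous_sqrt.comp_aestronglyMeasurable hid.1
  have hGam : AEStronglyMeasurable Ga μ :=
    Real.continuous_sqrt.comp_aestronglyMeasurable hia.1
  have hF0 : ∀ θ, 0 ≤ F θ := fun θ => Real.sqrt_nonneg _
  have hGd0 : ∀ θ, 0 ≤ Gd θ := fun θ => Real.sqrt_nonneg _
  have hGa0 : ∀ θ, 0 ≤ Ga θ := fun θ => Real.sqrt_nonneg _
  have hFsq : ∀ θ, F θ ^ 2 = Q (b θ - a θ) := fun θ =>
    Real.sq_sqrt (quad_nonneg' hPS _)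
  have hGdsq : ∀ θ, Gd θ ^ 2 = Φdag θ := fun θ => Real.sq_sqrt (hΦd0 θ)
  have hGasq : ∀ θ, Ga θ ^ 2 = Φappr θ := fun θ => Real.sq_sqrt (hΦa0 θ)
  -- integrability
  have hQcint : Integrable (fun θ => Q (b θ - a θ)) μ := by
    refine Integrable.mono' ((hia.const_mul 4).add (hid.const_mul 4))
      hQcm.aestronglyMeasurable (ae_of_all _ fun θ => ?_)
    rw [Real.norm_eq_abs, abs_of_nonneg (quad_nonneg' hPS _)]
    have h1 := quad_sub_le hPS (b θ) (a θ)
    have h2 := hΦd θ; have h3 := hΦa θ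
    simp only [hQ, Pi.add_apply] at h1 h2 h3 ⊢
    nlinarith
  have hF2 : Integrable (fun θ => F θ ^ 2) μ := by
    simpa only [hFsq] using hQcint
  have hGd2 : Integrable (fun θ => Gd θ ^ 2) μ := by simpa only [hGdsq] using hid
  have hGa2 : Integrable (fun θ => Ga θ ^ 2) μ := by simpa only [hGasq] using hia
  have hprod : ∀ {G : X → ℝ}, (∀ θ, 0 ≤ G θ) → AEStronglyMeasurable G μ →
      Integrable (fun θ => G θ ^ 2) μ → Integrable (fun θ => F θ * G θ) μ := by
    intro G hG0 hGm hG2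
    refine Integrable.mono' ((hF2.add hG2).const_mul (1/2)) (hFm.mul hGm)
      (ae_of_all _ fun θ => ?_)
    rw [Real.norm_eq_abs, abs_of_nonneg (mul_nonneg (hF0 θ) (hG0 θ))]
    simp only [Pi.add_apply]
    nlinarith [sq_nonneg (F θ - G θ)]
  have hFGd : Integrable (fun θ => F θ * Gd θ) μ := hprod hGd0 hGdm hGd2
  have hFGa : Integrable (fun θ => F θ * Ga θ) μ := hprod hGa0 hGam hGa2
  -- pointwise bound
  have hs2 : Real.sqrt 2 * Real.sqrt 2 = 2 := Real.mul_self_sqrt (by norm_num)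
  have hs2ne : Real.sqrt 2 ≠ 0 := by positivity
  have hinv : (Real.sqrt 2)⁻¹ = Real.sqrt 2 / 2 := by
    rw [eq_div_iff (by norm_num : (2:ℝ) ≠ 0), ← hs2]
    field_simp
    rw [Real.sqrt_sq (Real.sqrt_nonneg _)]
  have hpt : ∀ θ, |Φdag θ - Φappr θ| ≤
      (Real.sqrt 2)⁻¹ * (F θ * Gd θ + F θ * Ga θ) := by
    intro θ
    have hkey := key_ineq hPS (a θ) (b θ)
    have hQab : Q (a θ - b θ) = Q (b θ - a θ) := by
      have : a θ - b θ = -(b θ - a θ) := by abel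
      rw [hQ]; simp only [this, Matrix.mulVec_neg, neg_dotProduct, dotProduct_neg, neg_neg]
    have hsa : Real.sqrt (Q (a θ)) = Real.sqrt 2 * Gd θ := by
      rw [hGd, ← Real.sqrt_mul (by norm_num : (0:ℝ) ≤ 2), hΦd θ]
      ring_nf
    have hsb : Real.sqrt (Q (b θ)) = Real.sqrt 2 * Ga θ := by
      rw [hGa, ← Real.sqrt_mul (by norm_num : (0:ℝ) ≤ 2), hΦa θ]
      ring_nf
    have habs : |Φdag θ - Φappr θ| = (1/2) * |Q (a θ) - Q (b θ)| := by
      rw [hΦd θ, hΦa θ, ← mul_sub, abs_mul]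
      norm_num
    rw [habs, hinv]
    have h2 : |Q (a θ) - Q (b θ)| ≤
        Real.sqrt (Q (a θ - b θ)) * (Real.sqrt (Q (a θ)) + Real.sqrt (Q (b θ))) := hkey
    rw [hQab, hsa, hsb] at h2
    have hFθ : F θ = Real.sqrt (Q (b θ - a θ)) := rfl
    rw [hFθ]
    calc (1/2) * |Q (a θ) - Q (b θ)|
        ≤ (1/2) * (Real.sqrt (Q (b θ - a θ)) * (Real.sqrt 2 * Gd θ + Real.sqrt 2 * Ga θ)) := by
          have h3 := Real.sqrt_nonneg (Q (b θ - a θ))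
          have h4 := abs_nonneg (Q (a θ) - Q (b θ)); nlinarith
      _ = Real.sqrt 2 / 2 * (Real.sqrt (Q (b θ - a θ)) * Gd θ +
            Real.sqrt (Q (b θ - a θ)) * Ga θ) := by ring
  -- integrate
  have hint : ∫ θ, |Φdag θ - Φappr θ| ∂μ ≤
      ∫ θ, (Real.sqrt 2)⁻¹ * (F θ * Gd θ + F θ * Ga θ) ∂μ :=
    integral_mono (hid.sub hia).abs ((hFGd.add hFGa).const_mul _) hpt
  have hsplit : ∫ θ, (Real.sqrt 2)⁻¹ * (F θ * Gd θ + F θ * Ga θ) ∂μ =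
      (Real.sqrt 2)⁻¹ * ((∫ θ, F θ * Gd θ ∂μ) + ∫ θ, F θ * Ga θ ∂μ) := by
    rw [integral_const_mul, integral_add hFGd hFGa]
  have hH1 := holder2 μ hF0 hGd0 hFm hGdm hF2 hGd2
  have hH2 := holder2 μ hF0 hGa0 hFm hGam hF2 hGa2
  -- identify integrals
  have hIF : ∫ θ, F θ ^ 2 ∂μ =
      ∫ θ, |(O (Mdag θ - Mappr θ)) ⬝ᵥ (Γ⁻¹ *ᵥ (O (Mdag θ - Mappr θ)))| ∂μ := by
    refine integral_congr_ae (ae_of_all _ fun θ => ?_)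
    show F θ ^ 2 = |(O (Mdag θ - Mappr θ)) ⬝ᵥ (Γ⁻¹ *ᵥ (O (Mdag θ - Mappr θ)))|
    rw [hFsq θ, hOd θ, abs_of_nonneg (quad_nonneg' hPS _)]
  have hId : ∫ θ, Gd θ ^ 2 ∂μ = ∫ θ, |Φdag θ| ∂μ := by
    refine integral_congr_ae (ae_of_all _ fun θ => ?_)
    show Gd θ ^ 2 = |Φdag θ|
    rw [hGdsq θ, abs_of_nonneg (hΦd0 θ)]
  have hIa : ∫ θ, Ga θ ^ 2 ∂μ = ∫ θ, |Φappr θ| ∂μ := by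
    refine integral_congr_ae (ae_of_all _ fun θ => ?_)
    show Ga θ ^ 2 = |Φappr θ|
    rw [hGasq θ, abs_of_nonneg (hΦa0 θ)]
  rw [hIF] at hH1 hH2
  rw [hId] at hH1
  rw [hIa] at hH2
  have hinvpos : (0:ℝ) ≤ (Real.sqrt 2)⁻¹ := by positivity
  calc ∫ θ, |Φdag θ - Φappr θ| ∂μ
      ≤ (Real.sqrt 2)⁻¹ * ((∫ θ, F θ * Gd θ ∂μ) + ∫ θ, F θ * Ga θ ∂μ) := by
        rw [← hsplit]; exact hint
    _ ≤ (Real.sqrt 2)⁻¹ *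
        (Real.sqrt (∫ θ, |(O (Mdag θ - Mappr θ)) ⬝ᵥ (Γ⁻¹ *ᵥ (O (Mdag θ - Mappr θ)))| ∂μ) *
            Real.sqrt (∫ θ, |Φdag θ| ∂μ) +
          Real.sqrt (∫ θ, |(O (Mdag θ - Mappr θ)) ⬝ᵥ (Γ⁻¹ *ᵥ (O (Mdag θ - Mappr θ)))| ∂μ) *
            Real.sqrt (∫ θ, |Φappr θ| ∂μ)) :=
        mul_le_mul_of_nonneg_left (add_le_add hH1 hH2) hinvpos
    _ = _ := by ring
end

section
/- If the best misfit Φ^† and the enhanced noise misfit Φ^e both belong to L¹_{μ_θ}, then ‖Φ^† − Φ^e‖_{L¹_{μ_θ}} ≤ 2^{−1/2} · ‖ |O(δ^† − m_ε)|²_{Σ_η^{−1}} ‖_{L¹_{μ_θ}}^{1/2} · ( ‖Φ^†‖_{L¹_{μ_θ}}^{1/2} + C_e · ‖Φ^e‖_{L¹_{μ_θ}}^{1/2} ) + 2^{−1} · ‖ |y − O∘M − O m_ε|²_{Σ_η^{−1} − (Σ_η+S)^{−1}} ‖_{L¹_{μ_θ}}, where |z|²_{Σ_η^{−1} − (Σ_η+S)^{−1}}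 := |z|²_{Σ_η^{−1}} − |z|²_{(Σ_η+S)^{−1}}. -/
open MeasureTheory Real Matrix

/-- The ℓ²→ℓ² operator norm of a real square matrix. -/
noncomputable def matOpNorm {n : ℕ} (A : Matrix (Fin n) (Fin n) ℝ) : ℝ :=
  ‖LinearMap.toContinuousLinearMap (Matrix.toEuclideanLin A)‖

/-- The square root of a positive semidefinite matrix, as defined in the older Mathlib
(removed since). -/
noncomputable def Matrix.PosSemidef.sqrt {n : Type*} [Fintype n] [DecidableEq n]
    {A : Matrix n n ℝ} (hA : A.PosSemidef) : Matrix n n ℝ :=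
  hA.1.eigenvectorUnitary.1 * diagonal ((↑) ∘ Real.sqrt ∘ hA.1.eigenvalues) *
    (star hA.1.eigenvectorUnitary : Matrix n n ℝ)

open scoped MatrixOrder in
lemma Matrix.PosSemidef.sqrt_eq_cfc {n : Type*} [Fintype n] [DecidableEq n]
    {A : Matrix n n ℝ} (hA : A.PosSemidef) : hA.sqrt = CFC.sqrt A := by
  rw [CFC.sqrt_eq_real_sqrt A hA.nonneg, cfcₙ_eq_cfc, hA.1.cfc_eq]
  rfl

open scoped MatrixOrder in
lemma Matrix.PosSemidef.sqrt_mul_self {n : Type*} [Fintype n] [DecidableEq n]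
    {A : Matrix n n ℝ} (hA : A.PosSemidef) : hA.sqrt * hA.sqrt = A := by
  rw [hA.sqrt_eq_cfc]
  exact CFC.sqrt_mul_sqrt_self A hA.nonneg

open scoped MatrixOrder in
lemma Matrix.PosSemidef.posSemidef_sqrt {n : Type*} [Fintype n] [DecidableEq n]
    {A : Matrix n n ℝ} (hA : A.PosSemidef) : hA.sqrt.PosSemidef := by
  rw [hA.sqrt_eq_cfc]
  exact (CFC.sqrt_nonneg A).posSemidef

open scoped MatrixOrder in
lemma Matrix.PosSemidef.eq_sqrt_of_sq_eq {n : Type*} [Fintype n] [DecidableEq n]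
    {A : Matrix n n ℝ} (hA : A.PosSemidef) (B : Matrix n n ℝ) {hB : B.PosSemidef}
    (hAB : A ^ 2 = B) : A = hB.sqrt := by
  rw [hB.sqrt_eq_cfc]
  exact (CFC.sqrt_unique (by rw [← sq]; exact hAB) hA.nonneg).symm

lemma matOpNorm_nonneg {n : ℕ} (A : Matrix (Fin n) (Fin n) ℝ) : 0 ≤ matOpNorm A :=
  norm_nonneg _


section helpers
variable {n : ℕ}

lemma dot_self_nonneg' (u : Fin n → ℝ) : 0 ≤ u ⬝ᵥ u :=
  Finset.sum_nonneg fun _ _ => mul_self_nonneg _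

lemma dot_cs' (u v : Fin n → ℝ) : |u ⬝ᵥ v| ≤ Real.sqrt (u ⬝ᵥ u) * Real.sqrt (v ⬝ᵥ v) := by
  have h := Finset.sum_mul_sq_le_sq_mul_sq Finset.univ u v
  rw [← Real.sqrt_sq_eq_abs, ← Real.sqrt_mul (dot_self_nonneg' u)]
  apply Real.sqrt_le_sqrt
  simpa [dotProduct, sq] using h

lemma psd_dot_nonneg {P : Matrix (Fin n) (Fin n) ℝ} (hP : P.PosSemidef) (x : Fin n → ℝ) :
    0 ≤ x ⬝ᵥ P *ᵥ x := by
  have := hP.dotProduct_mulVec_nonneg x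
  simpa using this

lemma herm_vecMul {P : Matrix (Fin n) (Fin n) ℝ} (hP : P.IsHermitian) (x : Fin n → ℝ) :
    x ᵥ* P = P *ᵥ x := by
  rw [← mulVec_transpose]
  rw [← conjTranspose_eq_transpose_of_trivial, hP.eq]

lemma herm_sym {P : Matrix (Fin n) (Fin n) ℝ} (hP : P.IsHermitian) (u v : Fin n → ℝ) :
    u ⬝ᵥ P *ᵥ v = v ⬝ᵥ P *ᵥ u := by
  rw [dotProduct_mulVec, herm_vecMul hP, dotProduct_comm]

lemma quad_eq_dot {P : Matrix (Fin n) (Fin n) ℝ} (hP : P.PosSemidef) (x : Fin n → ℝ) :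
    x ⬝ᵥ P *ᵥ x = (hP.sqrt *ᵥ x) ⬝ᵥ (hP.sqrt *ᵥ x) := by
  conv_lhs => rw [← hP.sqrt_mul_self]
  rw [← mulVec_mulVec, dotProduct_mulVec, herm_vecMul hP.posSemidef_sqrt.1]

lemma bilin_eq_dot {P : Matrix (Fin n) (Fin n) ℝ} (hP : P.PosSemidef) (x y : Fin n → ℝ) :
    x ⬝ᵥ P *ᵥ y = (hP.sqrt *ᵥ x) ⬝ᵥ (hP.sqrt *ᵥ y) := by
  conv_lhs => rw [← hP.sqrt_mul_self]
  rw [← mulVec_mulVec, dotProduct_mulVec, herm_vecMul hP.posSemidef_sqrt.1]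

lemma bilin_cs {P : Matrix (Fin n) (Fin n) ℝ} (hP : P.PosSemidef) (x y : Fin n → ℝ) :
    |x ⬝ᵥ P *ᵥ y| ≤ Real.sqrt (x ⬝ᵥ P *ᵥ x) * Real.sqrt (y ⬝ᵥ P *ᵥ y) := by
  rw [bilin_eq_dot hP, quad_eq_dot hP x, quad_eq_dot hP y]
  exact dot_cs' _ _

lemma quad_sqrt_add {P : Matrix (Fin n) (Fin n) ℝ} (hP : P.PosSemidef) (x y : Fin n → ℝ) :
    Real.sqrt ((x + y) ⬝ᵥ P *ᵥ (x + y)) ≤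
      Real.sqrt (x ⬝ᵥ P *ᵥ x) + Real.sqrt (y ⬝ᵥ P *ᵥ y) := by
  set Nx := Real.sqrt (x ⬝ᵥ P *ᵥ x)
  set Ny := Real.sqrt (y ⬝ᵥ P *ᵥ y)
  have hNx : 0 ≤ Nx := Real.sqrt_nonneg _
  have hNy : 0 ≤ Ny := Real.sqrt_nonneg _
  have hx2 : x ⬝ᵥ P *ᵥ x = Nx ^ 2 := (Real.sq_sqrt (psd_dot_nonneg hP x)).symm
  have hy2 : y ⬝ᵥ P *ᵥ y = Ny ^ 2 := (Real.sq_sqrt (psd_dot_nonneg hP y)).symm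
  have hcross : x ⬝ᵥ P *ᵥ y ≤ Nx * Ny := (le_abs_self _).trans (bilin_cs hP x y)
  have hexp : (x + y) ⬝ᵥ P *ᵥ (x + y) ≤ (Nx + Ny) ^ 2 := by
    have hsym := herm_sym hP.1 y x
    simp only [mulVec_add, dotProduct_add, add_dotProduct]
    nlinarith [hx2, hy2, hcross, hsym]
  calc Real.sqrt ((x + y) ⬝ᵥ P *ᵥ (x + y)) ≤ Real.sqrt ((Nx + Ny) ^ 2) :=
        Real.sqrt_le_sqrt hexp
    _ = Nx + Ny := Real.sqrt_sq (by positivity)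

lemma quad_diff_eq {P : Matrix (Fin n) (Fin n) ℝ} (hP : P.IsHermitian) (a b : Fin n → ℝ) :
    a ⬝ᵥ P *ᵥ a - b ⬝ᵥ P *ᵥ b = -((b - a) ⬝ᵥ P *ᵥ (a + b)) := by
  have h := herm_sym hP a b
  simp only [mulVec_add, mulVec_sub, dotProduct_add, dotProduct_sub, sub_dotProduct,
    add_dotProduct]
  linarith

lemma quad_parallelogram {P : Matrix (Fin n) (Fin n) ℝ} (hP : P.IsHermitian) (x y : Fin n → ℝ) :
    (x - y) ⬝ᵥ P *ᵥ (x - y) + (x + y) ⬝ᵥ P *ᵥ (x + y) =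
      2 * (x ⬝ᵥ P *ᵥ x) + 2 * (y ⬝ᵥ P *ᵥ y) := by
  have h := herm_sym hP x y
  simp only [mulVec_add, mulVec_sub, dotProduct_add, dotProduct_sub, sub_dotProduct,
    add_dotProduct]
  linarith

lemma euclid_norm_eq (v : Fin n → ℝ) :
    ‖(WithLp.equiv 2 (Fin n → ℝ)).symm v‖ = Real.sqrt (v ⬝ᵥ v) := by
  rw [EuclideanSpace.norm_eq]
  congr 1
  simp [dotProduct, sq]

lemma opnorm_bound (A : Matrix (Fin n) (Fin n) ℝ) (x : Fin n → ℝ) :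
    Real.sqrt ((A *ᵥ x) ⬝ᵥ (A *ᵥ x)) ≤ matOpNorm A * Real.sqrt (x ⬝ᵥ x) := by
  have h := (LinearMap.toContinuousLinearMap (Matrix.toEuclideanLin A)).le_opNorm
    ((WithLp.equiv 2 (Fin n → ℝ)).symm x)
  rw [LinearMap.coe_toContinuousLinearMap'] at h
  rw [Matrix.toEuclideanLin_apply_piLp_toLp, euclid_norm_eq] at h
  exact (euclid_norm_eq (A *ᵥ x)).symm.trans_le h

lemma sqrt_mul_inv_sqrt {G : Matrix (Fin n) (Fin n) ℝ} (hG : G.PosDef) :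
    hG.posSemidef.sqrt * hG.inv.posSemidef.sqrt = 1 := by
  set T := hG.posSemidef.sqrt with hT
  have hTdet : IsUnit T.det := by
    have h2 : T.det * T.det = G.det := by
      rw [← Matrix.det_mul, hG.posSemidef.sqrt_mul_self]
    have : T.det ≠ 0 := by
      intro h0
      rw [h0, mul_zero] at h2
      exact hG.det_pos.ne' h2.symm
    exact this.isUnit
  have hTinv : (T⁻¹).PosSemidef := hG.posSemidef.posSemidef_sqrt.inv
  have hsq : T⁻¹ ^ 2 = G⁻¹ := by
    rw [pow_two, ← Matrix.mul_inv_rev, hG.posSemidef.sqrt_mul_self]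
  have : T⁻¹ = hG.inv.posSemidef.sqrt := hTinv.eq_sqrt_of_sq_eq _ hsq
  rw [← this, Matrix.mul_nonsing_inv _ hTdet]

variable {Y : Type*} [MeasurableSpace Y]

lemma meas_quad (P : Matrix (Fin n) (Fin n) ℝ) {v : Y → Fin n → ℝ} (hv : Measurable v) :
    Measurable (fun θ => v θ ⬝ᵥ P *ᵥ v θ) := by
  have hc : Continuous (fun w : Fin n → ℝ => w ⬝ᵥ P *ᵥ w) := by
    simp only [dotProduct, mulVec]
    fun_prop
  exact hc.measurable.comp hv

lemma integral_sqrt_mul_sqrt_le (μ : Measure Y) (u v : Y → ℝ)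
    (hu : Integrable u μ) (hv : Integrable v μ)
    (hu0 : ∀ θ, 0 ≤ u θ) (hv0 : ∀ θ, 0 ≤ v θ) :
    ∫ θ, Real.sqrt (u θ) * Real.sqrt (v θ) ∂μ ≤
      Real.sqrt (∫ θ, u θ ∂μ) * Real.sqrt (∫ θ, v θ ∂μ) := by
  set A := ∫ θ, u θ ∂μ with hA
  set B := ∫ θ, v θ ∂μ with hB
  have hA0 : 0 ≤ A := integral_nonneg hu0
  have hB0 : 0 ≤ B := integral_nonneg hv0
  have key : ∀ t : ℝ, 0 < t →
      ∫ θ, Real.sqrt (u θ) * Real.sqrt (v θ) ∂μ ≤ (t * A + t⁻¹ * B) / 2 := by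
    intro t ht
    have hti : t * t⁻¹ = 1 := mul_inv_cancel₀ ht.ne'
    have hint : Integrable (fun θ => (t * u θ + t⁻¹ * v θ) / 2) μ :=
      ((hu.const_mul t).add (hv.const_mul t⁻¹)).div_const 2
    have hle : ∀ θ, Real.sqrt (u θ) * Real.sqrt (v θ) ≤ (t * u θ + t⁻¹ * v θ) / 2 := by
      intro θ
      have hsu : Real.sqrt (u θ) ^ 2 = u θ := Real.sq_sqrt (hu0 θ)
      have hsv : Real.sqrt (v θ) ^ 2 = v θ := Real.sq_sqrt (hv0 θ)
      obtain ⟨su, hsu', hsu0⟩ : ∃ su, Real.sqrt (u θ) = su ∧ 0 ≤ su := ⟨_, rfl, Real.sqrt_nonneg _⟩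
      obtain ⟨sv, hsv', hsv0⟩ : ∃ sv, Real.sqrt (v θ) = sv ∧ 0 ≤ sv := ⟨_, rfl, Real.sqrt_nonneg _⟩
      rw [hsu'] at hsu ⊢
      rw [hsv'] at hsv ⊢
      have key2 : 2 * t * (su * sv) ≤ t * (t * su ^ 2) + sv ^ 2 := by
        nlinarith [sq_nonneg (t * su - sv)]
      have h3 : 2 * (su * sv) ≤ t * su ^ 2 + t⁻¹ * sv ^ 2 := by
        rw [← mul_le_mul_iff_right₀ ht]
        calc t * (2 * (su * sv)) = 2 * t * (su * sv) := by ring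
          _ ≤ t * (t * su ^ 2) + sv ^ 2 := key2
          _ = t * (t * su ^ 2 + t⁻¹ * sv ^ 2) := by
              rw [mul_add]
              congr 1
              rw [← mul_assoc, hti, one_mul]
      rw [← hsu, ← hsv]
      linarith
    calc ∫ θ, Real.sqrt (u θ) * Real.sqrt (v θ) ∂μ
        ≤ ∫ θ, (t * u θ + t⁻¹ * v θ) / 2 ∂μ := by
          refine integral_mono_of_nonneg (Filter.Eventually.of_forall fun θ => by positivity)
            hint (Filter.Eventually.of_forall hle)
      _ = (t * A + t⁻¹ * B) / 2 := by
          rw [integral_div, integral_add (hu.const_mul t) (hv.const_mul t⁻¹),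
            integral_const_mul, integral_const_mul]
  rcases eq_or_lt_of_le hA0 with hA'|hA'
  · have hu0' : u =ᵐ[μ] 0 := (integral_eq_zero_iff_of_nonneg hu0 hu).1 hA'.symm
    have : ∫ θ, Real.sqrt (u θ) * Real.sqrt (v θ) ∂μ = 0 := by
      rw [integral_eq_zero_iff_of_nonneg]
      · filter_upwards [hu0'] with θ hθ
        simp [hθ]
      · intro θ; positivity
      · refine Integrable.mono' ((hu.add hv).div_const 2) ?_
          (Filter.Eventually.of_forall fun θ => ?_)
        · exact (((Real.continuous_sqrt.measurable.comp_aemeasurable hu.1.aemeasurable).mul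
            (Real.continuous_sqrt.measurable.comp_aemeasurable hv.1.aemeasurable)).aestronglyMeasurable)
        · have hsu : Real.sqrt (u θ) ^ 2 = u θ := Real.sq_sqrt (hu0 θ)
          have hsv : Real.sqrt (v θ) ^ 2 = v θ := Real.sq_sqrt (hv0 θ)
          have : Real.sqrt (u θ) * Real.sqrt (v θ) ≤ (u θ + v θ) / 2 := by
            nlinarith [sq_nonneg (Real.sqrt (u θ) - Real.sqrt (v θ))]
          rw [Real.norm_eq_abs, abs_of_nonneg (by positivity)]
          exact this
    rw [this]
    positivity
  · rcases eq_or_lt_of_le hB0 with hB'|hB'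
    · have hv0' : v =ᵐ[μ] 0 := (integral_eq_zero_iff_of_nonneg hv0 hv).1 hB'.symm
      have : ∫ θ, Real.sqrt (u θ) * Real.sqrt (v θ) ∂μ = 0 := by
        rw [integral_eq_zero_iff_of_nonneg]
        · filter_upwards [hv0'] with θ hθ
          simp [hθ]
        · intro θ; positivity
        · refine Integrable.mono' ((hu.add hv).div_const 2) ?_
            (Filter.Eventually.of_forall fun θ => ?_)
          · exact (((Real.continuous_sqrt.measurable.comp_aemeasurable hu.1.aemeasurable).mul
            (Real.continuous_sqrt.measurable.comp_aemeasurable hv.1.aemeasurable)).aestronglyMeasurable)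
          · have hsu : Real.sqrt (u θ) ^ 2 = u θ := Real.sq_sqrt (hu0 θ)
            have hsv : Real.sqrt (v θ) ^ 2 = v θ := Real.sq_sqrt (hv0 θ)
            have : Real.sqrt (u θ) * Real.sqrt (v θ) ≤ (u θ + v θ) / 2 := by
              nlinarith [sq_nonneg (Real.sqrt (u θ) - Real.sqrt (v θ))]
            rw [Real.norm_eq_abs, abs_of_nonneg (by positivity)]
            exact this
      rw [this]
      positivity
    · set sA := Real.sqrt A with hsA
      set sB := Real.sqrt B with hsB
      have hsA0 : 0 < sA := Real.sqrt_pos.2 hA'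
      have hsB0 : 0 < sB := Real.sqrt_pos.2 hB'
      have hsA2 : sA ^ 2 = A := Real.sq_sqrt hA0
      have hsB2 : sB ^ 2 = B := Real.sq_sqrt hB0
      have ht : (0:ℝ) < sB / sA := by positivity
      have := key (sB / sA) ht
      have heq : ((sB / sA) * A + (sB / sA)⁻¹ * B) / 2 = sA * sB := by
        rw [inv_div]
        field_simp
        nlinarith [hsA2, hsB2]
      rw [heq] at this
      exact this
end helpers

lemma main_aux {Y : Type*} [MeasurableSpace Y] (μ : Measure Y) {n : ℕ}
    (a b : Y → Fin n → ℝ) (hma : Measurable a) (hmb : Measurable b)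
    (Γ S : Matrix (Fin n) (Fin n) ℝ) (hΓ : Γ.PosDef) (hS : S.PosSemidef)
    (Ce : ℝ)
    (hCe : Ce = matOpNorm (hΓ.inv.posSemidef.sqrt * (hΓ.add_posSemidef hS).posSemidef.sqrt))
    (Φd Φe : Y → ℝ)
    (hΦd : Φd = fun θ => (1/2) * (a θ ⬝ᵥ (Γ⁻¹ *ᵥ a θ)))
    (hΦe : Φe = fun θ => (1/2) * (b θ ⬝ᵥ ((Γ + S)⁻¹ *ᵥ b θ)))
    (hid : Integrable Φd μ) (hie : Integrable Φe μ) :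
    ∫ θ, |Φd θ - Φe θ| ∂μ ≤
      (Real.sqrt 2)⁻¹ *
        Real.sqrt (∫ θ, |(b θ - a θ) ⬝ᵥ (Γ⁻¹ *ᵥ (b θ - a θ))| ∂μ) *
        (Real.sqrt (∫ θ, |Φd θ| ∂μ) + Ce * Real.sqrt (∫ θ, |Φe θ| ∂μ)) +
      (1/2) * ∫ θ, |(b θ ⬝ᵥ (Γ⁻¹ *ᵥ b θ)) - (b θ ⬝ᵥ ((Γ + S)⁻¹ *ᵥ b θ))| ∂μ := by
  have hG : (Γ + S).PosDef := hΓ.add_posSemidef hS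
  have hΓi : (Γ⁻¹).PosSemidef := hΓ.inv.posSemidef
  have hGi : ((Γ + S)⁻¹).PosSemidef := hG.inv.posSemidef
  have hΦd0 : ∀ θ, 0 ≤ Φd θ := fun θ => by
    simp only [hΦd]; exact mul_nonneg (by norm_num) (psd_dot_nonneg hΓi _)
  have hΦe0 : ∀ θ, 0 ≤ Φe θ := fun θ => by
    simp only [hΦe]; exact mul_nonneg (by norm_num) (psd_dot_nonneg hGi _)
  have hCe0 : 0 ≤ Ce := hCe ▸ matOpNorm_nonneg _
  have hNb : ∀ x : Fin n → ℝ, Real.sqrt (x ⬝ᵥ Γ⁻¹ *ᵥ x) ≤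
      Ce * Real.sqrt (x ⬝ᵥ (Γ + S)⁻¹ *ᵥ x) := by
    intro x
    rw [quad_eq_dot hΓi, quad_eq_dot hGi]
    have hx : hΓi.sqrt *ᵥ x = (hΓi.sqrt * hG.posSemidef.sqrt) *ᵥ (hGi.sqrt *ᵥ x) := by
      rw [mulVec_mulVec, mul_assoc, sqrt_mul_inv_sqrt hG, mul_one]
    rw [hx, hCe]
    exact opnorm_bound _ _
  -- measurability
  have hmab : Measurable (fun θ => b θ - a θ) := hmb.sub hma
  have hQAm : Measurable (fun θ => a θ ⬝ᵥ Γ⁻¹ *ᵥ a θ) := meas_quad _ hma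
  have hQBgm : Measurable (fun θ => b θ ⬝ᵥ Γ⁻¹ *ᵥ b θ) := meas_quad _ hmb
  have hQBm : Measurable (fun θ => b θ ⬝ᵥ (Γ + S)⁻¹ *ᵥ b θ) := meas_quad _ hmb
  have hqqm : Measurable (fun θ => (b θ - a θ) ⬝ᵥ Γ⁻¹ *ᵥ (b θ - a θ)) := meas_quad _ hmab
  have hΦdm : Measurable Φd := by
    rw [hΦd]; exact (meas_quad _ hma).const_mul _
  have hΦem : Measurable Φe := by
    rw [hΦe]; exact (meas_quad _ hmb).const_mul _
  -- integrability
  have iQA : Integrable (fun θ => a θ ⬝ᵥ Γ⁻¹ *ᵥ a θ) μ := by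
    have he : (fun θ => a θ ⬝ᵥ Γ⁻¹ *ᵥ a θ) = fun θ => 2 * Φd θ := by
      funext θ; simp only [hΦd]; ring
    rw [he]; exact hid.const_mul 2
  have iQB : Integrable (fun θ => b θ ⬝ᵥ (Γ + S)⁻¹ *ᵥ b θ) μ := by
    have he : (fun θ => b θ ⬝ᵥ (Γ + S)⁻¹ *ᵥ b θ) = fun θ => 2 * Φe θ := by
      funext θ; simp only [hΦe]; ring
    rw [he]; exact hie.const_mul 2
  have hQBgle : ∀ θ, b θ ⬝ᵥ Γ⁻¹ *ᵥ b θ ≤ Ce ^ 2 * (b θ ⬝ᵥ (Γ + S)⁻¹ *ᵥ b θ) := by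
    intro θ
    have h1 := hNb (b θ)
    have h0g := psd_dot_nonneg hΓi (b θ)
    have h0 := psd_dot_nonneg hGi (b θ)
    have h2 : Real.sqrt (b θ ⬝ᵥ Γ⁻¹ *ᵥ b θ) ^ 2 ≤
        (Ce * Real.sqrt (b θ ⬝ᵥ (Γ + S)⁻¹ *ᵥ b θ)) ^ 2 :=
      pow_le_pow_left₀ (Real.sqrt_nonneg _) h1 2
    rwa [Real.sq_sqrt h0g, mul_pow, Real.sq_sqrt h0] at h2
  have iQBg : Integrable (fun θ => b θ ⬝ᵥ Γ⁻¹ *ᵥ b θ) μ := by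
    refine Integrable.mono' (iQB.const_mul (Ce ^ 2)) hQBgm.aestronglyMeasurable
      (Filter.Eventually.of_forall fun θ => ?_)
    rw [Real.norm_eq_abs, abs_of_nonneg (psd_dot_nonneg hΓi _)]
    exact hQBgle θ
  have iqq : Integrable (fun θ => (b θ - a θ) ⬝ᵥ Γ⁻¹ *ᵥ (b θ - a θ)) μ := by
    have ig : Integrable (fun θ => 2 * (b θ ⬝ᵥ Γ⁻¹ *ᵥ b θ) + 2 * (a θ ⬝ᵥ Γ⁻¹ *ᵥ a θ)) μ :=
      (iQBg.const_mul 2).add (iQA.const_mul 2)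
    refine Integrable.mono' ig
      hqqm.aestronglyMeasurable (Filter.Eventually.of_forall fun θ => ?_)
    have hpar := quad_parallelogram hΓi.1 (b θ) (a θ)
    have h0 := psd_dot_nonneg hΓi (b θ + a θ)
    rw [Real.norm_eq_abs, abs_of_nonneg (psd_dot_nonneg hΓi _)]
    linarith
  have iF1 : Integrable (fun θ => Real.sqrt ((b θ - a θ) ⬝ᵥ Γ⁻¹ *ᵥ (b θ - a θ)) *
      Real.sqrt (Φd θ)) μ := by
    have ig : Integrable (fun θ => (((b θ - a θ) ⬝ᵥ Γ⁻¹ *ᵥ (b θ - a θ)) + Φd θ) / 2) μ :=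
      (iqq.add hid).div_const 2
    refine Integrable.mono' ig
      ((Real.continuous_sqrt.measurable.comp hqqm).mul
        (Real.continuous_sqrt.measurable.comp hΦdm)).aestronglyMeasurable
      (Filter.Eventually.of_forall fun θ => ?_)
    rw [Real.norm_eq_abs, abs_of_nonneg (by positivity)]
    nlinarith [sq_nonneg (Real.sqrt ((b θ - a θ) ⬝ᵥ Γ⁻¹ *ᵥ (b θ - a θ)) - Real.sqrt (Φd θ)),
      Real.sq_sqrt (psd_dot_nonneg hΓi (b θ - a θ)), Real.sq_sqrt (hΦd0 θ)]
  have iF2 : Integrable (fun θ => Real.sqrt ((b θ - a θ) ⬝ᵥ Γ⁻¹ *ᵥ (b θ - a θ)) *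
      Real.sqrt (Φe θ)) μ := by
    have ig : Integrable (fun θ => (((b θ - a θ) ⬝ᵥ Γ⁻¹ *ᵥ (b θ - a θ)) + Φe θ) / 2) μ :=
      (iqq.add hie).div_const 2
    refine Integrable.mono' ig
      ((Real.continuous_sqrt.measurable.comp hqqm).mul
        (Real.continuous_sqrt.measurable.comp hΦem)).aestronglyMeasurable
      (Filter.Eventually.of_forall fun θ => ?_)
    rw [Real.norm_eq_abs, abs_of_nonneg (by positivity)]
    nlinarith [sq_nonneg (Real.sqrt ((b θ - a θ) ⬝ᵥ Γ⁻¹ *ᵥ (b θ - a θ)) - Real.sqrt (Φe θ)),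
      Real.sq_sqrt (psd_dot_nonneg hΓi (b θ - a θ)), Real.sq_sqrt (hΦe0 θ)]
  have irr : Integrable (fun θ => |(b θ ⬝ᵥ Γ⁻¹ *ᵥ b θ) - (b θ ⬝ᵥ (Γ + S)⁻¹ *ᵥ b θ)|) μ :=
    (iQBg.sub iQB).abs
  -- arithmetic facts
  have h2s : Real.sqrt 2 * Real.sqrt 2 = 2 := Real.mul_self_sqrt (by norm_num)
  have hs2pos : (0:ℝ) < Real.sqrt 2 := Real.sqrt_pos.2 (by norm_num)
  have hhalf : (Real.sqrt 2)⁻¹ = 1/2 * Real.sqrt 2 := by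
    have h1 : (1/2 * Real.sqrt 2) * Real.sqrt 2 = 1 := by linear_combination h2s / 2
    exact (eq_inv_of_mul_eq_one_left h1).symm
  -- pointwise master bound
  have master : ∀ θ, |Φd θ - Φe θ| ≤
      (Real.sqrt 2)⁻¹ * (Real.sqrt ((b θ - a θ) ⬝ᵥ Γ⁻¹ *ᵥ (b θ - a θ)) * Real.sqrt (Φd θ))
      + Ce * ((Real.sqrt 2)⁻¹ * (Real.sqrt ((b θ - a θ) ⬝ᵥ Γ⁻¹ *ᵥ (b θ - a θ)) *
          Real.sqrt (Φe θ)))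
      + (1/2) * |(b θ ⬝ᵥ Γ⁻¹ *ᵥ b θ) - (b θ ⬝ᵥ (Γ + S)⁻¹ *ᵥ b θ)| := by
    intro θ
    have hsplit : Φd θ - Φe θ =
        (1/2) * ((a θ ⬝ᵥ Γ⁻¹ *ᵥ a θ) - (b θ ⬝ᵥ Γ⁻¹ *ᵥ b θ))
        + (1/2) * ((b θ ⬝ᵥ Γ⁻¹ *ᵥ b θ) - (b θ ⬝ᵥ (Γ + S)⁻¹ *ᵥ b θ)) := by
      simp only [hΦd, hΦe]; ring
    have hdiff : (a θ ⬝ᵥ Γ⁻¹ *ᵥ a θ) - (b θ ⬝ᵥ Γ⁻¹ *ᵥ b θ) =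
        -((b θ - a θ) ⬝ᵥ Γ⁻¹ *ᵥ (a θ + b θ)) := quad_diff_eq hΓi.1 _ _
    set sq := Real.sqrt ((b θ - a θ) ⬝ᵥ Γ⁻¹ *ᵥ (b θ - a θ)) with hsq
    have hsq0 : 0 ≤ sq := Real.sqrt_nonneg _
    have hQAe : a θ ⬝ᵥ Γ⁻¹ *ᵥ a θ = 2 * Φd θ := by simp only [hΦd]; ring
    have hQBe : b θ ⬝ᵥ (Γ + S)⁻¹ *ᵥ b θ = 2 * Φe θ := by simp only [hΦe]; ring
    have hsa : Real.sqrt (a θ ⬝ᵥ Γ⁻¹ *ᵥ a θ) = Real.sqrt 2 * Real.sqrt (Φd θ) := by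
      rw [hQAe, Real.sqrt_mul (by norm_num)]
    have hsb : Real.sqrt (b θ ⬝ᵥ Γ⁻¹ *ᵥ b θ) ≤ Ce * (Real.sqrt 2 * Real.sqrt (Φe θ)) := by
      have := hNb (b θ)
      rwa [hQBe, Real.sqrt_mul (by norm_num)] at this
    have hT1 : |(a θ ⬝ᵥ Γ⁻¹ *ᵥ a θ) - (b θ ⬝ᵥ Γ⁻¹ *ᵥ b θ)| ≤
        sq * (Real.sqrt 2 * Real.sqrt (Φd θ) + Ce * (Real.sqrt 2 * Real.sqrt (Φe θ))) := by
      rw [hdiff, abs_neg]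
      calc |(b θ - a θ) ⬝ᵥ Γ⁻¹ *ᵥ (a θ + b θ)|
          ≤ sq * Real.sqrt ((a θ + b θ) ⬝ᵥ Γ⁻¹ *ᵥ (a θ + b θ)) := bilin_cs hΓi _ _
        _ ≤ sq * (Real.sqrt (a θ ⬝ᵥ Γ⁻¹ *ᵥ a θ) + Real.sqrt (b θ ⬝ᵥ Γ⁻¹ *ᵥ b θ)) :=
            mul_le_mul_of_nonneg_left (quad_sqrt_add hΓi _ _) hsq0
        _ ≤ sq * (Real.sqrt 2 * Real.sqrt (Φd θ) + Ce * (Real.sqrt 2 * Real.sqrt (Φe θ))) := by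
            refine mul_le_mul_of_nonneg_left ?_ hsq0
            rw [← hsa]
            exact add_le_add le_rfl hsb
    calc |Φd θ - Φe θ|
        ≤ (1/2) * |(a θ ⬝ᵥ Γ⁻¹ *ᵥ a θ) - (b θ ⬝ᵥ Γ⁻¹ *ᵥ b θ)|
          + (1/2) * |(b θ ⬝ᵥ Γ⁻¹ *ᵥ b θ) - (b θ ⬝ᵥ (Γ + S)⁻¹ *ᵥ b θ)| := by
          rw [hsplit]
          refine (abs_add_le _ _).trans (le_of_eq ?_)
          rw [abs_mul, abs_mul, abs_of_nonneg (by norm_num : (0:ℝ) ≤ 1/2)]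
      _ ≤ (1/2) * (sq * (Real.sqrt 2 * Real.sqrt (Φd θ) + Ce * (Real.sqrt 2 * Real.sqrt (Φe θ))))
          + (1/2) * |(b θ ⬝ᵥ Γ⁻¹ *ᵥ b θ) - (b θ ⬝ᵥ (Γ + S)⁻¹ *ᵥ b θ)| := by
          linarith [hT1]
      _ = _ := by rw [hhalf]; ring
  -- rewrite absolute values in the goal
  have e1 : ∫ θ, |(b θ - a θ) ⬝ᵥ (Γ⁻¹ *ᵥ (b θ - a θ))| ∂μ
      = ∫ θ, (b θ - a θ) ⬝ᵥ Γ⁻¹ *ᵥ (b θ - a θ) ∂μ :=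
    integral_congr_ae (Filter.Eventually.of_forall fun θ =>
      abs_of_nonneg (psd_dot_nonneg hΓi _))
  have e2 : ∫ θ, |Φd θ| ∂μ = ∫ θ, Φd θ ∂μ :=
    integral_congr_ae (Filter.Eventually.of_forall fun θ => abs_of_nonneg (hΦd0 θ))
  have e3 : ∫ θ, |Φe θ| ∂μ = ∫ θ, Φe θ ∂μ :=
    integral_congr_ae (Filter.Eventually.of_forall fun θ => abs_of_nonneg (hΦe0 θ))
  rw [e1, e2, e3]
  have c1 := integral_sqrt_mul_sqrt_le μ _ _ iqq hid (fun θ => psd_dot_nonneg hΓi _) hΦd0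
  have c2 := integral_sqrt_mul_sqrt_le μ _ _ iqq hie (fun θ => psd_dot_nonneg hΓi _) hΦe0
  have hs2inv : (0:ℝ) ≤ (Real.sqrt 2)⁻¹ := by positivity
  have iT1 : Integrable (fun θ => (Real.sqrt 2)⁻¹ *
      (Real.sqrt ((b θ - a θ) ⬝ᵥ Γ⁻¹ *ᵥ (b θ - a θ)) * Real.sqrt (Φd θ))) μ :=
    iF1.const_mul _
  have iT2 : Integrable (fun θ => Ce * ((Real.sqrt 2)⁻¹ *
      (Real.sqrt ((b θ - a θ) ⬝ᵥ Γ⁻¹ *ᵥ (b θ - a θ)) * Real.sqrt (Φe θ)))) μ :=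
    (iF2.const_mul _).const_mul Ce
  have iT3 : Integrable (fun θ =>
      (1/2) * |(b θ ⬝ᵥ Γ⁻¹ *ᵥ b θ) - (b θ ⬝ᵥ (Γ + S)⁻¹ *ᵥ b θ)|) μ := irr.const_mul _
  have iT12 : Integrable (fun θ => (Real.sqrt 2)⁻¹ *
      (Real.sqrt ((b θ - a θ) ⬝ᵥ Γ⁻¹ *ᵥ (b θ - a θ)) * Real.sqrt (Φd θ))
      + Ce * ((Real.sqrt 2)⁻¹ *
      (Real.sqrt ((b θ - a θ) ⬝ᵥ Γ⁻¹ *ᵥ (b θ - a θ)) * Real.sqrt (Φe θ)))) μ := iT1.add iT2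
  calc ∫ θ, |Φd θ - Φe θ| ∂μ
      ≤ ∫ θ, ((Real.sqrt 2)⁻¹ * (Real.sqrt ((b θ - a θ) ⬝ᵥ Γ⁻¹ *ᵥ (b θ - a θ)) *
            Real.sqrt (Φd θ))
          + Ce * ((Real.sqrt 2)⁻¹ * (Real.sqrt ((b θ - a θ) ⬝ᵥ Γ⁻¹ *ᵥ (b θ - a θ)) *
            Real.sqrt (Φe θ)))
          + (1/2) * |(b θ ⬝ᵥ Γ⁻¹ *ᵥ b θ) - (b θ ⬝ᵥ (Γ + S)⁻¹ *ᵥ b θ)|) ∂μ := by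
        refine integral_mono_of_nonneg (Filter.Eventually.of_forall fun θ => abs_nonneg _)
          ?_ (Filter.Eventually.of_forall master)
        exact iT12.add iT3
    _ = (Real.sqrt 2)⁻¹ * ∫ θ, Real.sqrt ((b θ - a θ) ⬝ᵥ Γ⁻¹ *ᵥ (b θ - a θ)) *
            Real.sqrt (Φd θ) ∂μ
        + Ce * ((Real.sqrt 2)⁻¹ * ∫ θ, Real.sqrt ((b θ - a θ) ⬝ᵥ Γ⁻¹ *ᵥ (b θ - a θ)) *
            Real.sqrt (Φe θ) ∂μ)
        + (1/2) * ∫ θ, |(b θ ⬝ᵥ Γ⁻¹ *ᵥ b θ) - (b θ ⬝ᵥ (Γ + S)⁻¹ *ᵥ b θ)| ∂μ := by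
        rw [integral_add iT12 iT3, integral_add iT1 iT2,
          integral_const_mul, integral_const_mul, integral_const_mul, integral_const_mul]
    _ ≤ (Real.sqrt 2)⁻¹ * (Real.sqrt (∫ θ, (b θ - a θ) ⬝ᵥ Γ⁻¹ *ᵥ (b θ - a θ) ∂μ) *
            Real.sqrt (∫ θ, Φd θ ∂μ))
        + Ce * ((Real.sqrt 2)⁻¹ * (Real.sqrt (∫ θ, (b θ - a θ) ⬝ᵥ Γ⁻¹ *ᵥ (b θ - a θ) ∂μ) *
            Real.sqrt (∫ θ, Φe θ ∂μ)))
        + (1/2) * ∫ θ, |(b θ ⬝ᵥ Γ⁻¹ *ᵥ b θ) - (b θ ⬝ᵥ (Γ + S)⁻¹ *ᵥ b θ)| ∂μ := by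
        refine add_le_add (add_le_add (mul_le_mul_of_nonneg_left c1 hs2inv)
          (mul_le_mul_of_nonneg_left (mul_le_mul_of_nonneg_left c2 hs2inv) hCe0)) le_rfl
    _ = _ := by ring

theorem stmt4 {X U : Type*} [MeasurableSpace X] [NormedAddCommGroup U] [NormedSpace ℝ U]
    [CompleteSpace U] [MeasurableSpace U] [BorelSpace U]
    (μ : Measure X) [IsProbabilityMeasure μ] {n : ℕ}
    (Mdag Mappr : X → U) (hMdag : Measurable Mdag) (hMappr : Measurable Mappr)
    (O : U →L[ℝ] (Fin n → ℝ)) (y : Fin n → ℝ) (mε : U)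
    (Γ : Matrix (Fin n) (Fin n) ℝ) (hΓ : Γ.PosDef)
    (S : Matrix (Fin n) (Fin n) ℝ) (hS : S.PosSemidef)
    (Ce : ℝ)
    (hCe : Ce = matOpNorm (hΓ.inv.posSemidef.sqrt * (hΓ.add_posSemidef hS).posSemidef.sqrt))
    (Φdag Φenh : X → ℝ)
    (hΦdag : Φdag = fun θ => (1/2) * ((y - O (Mdag θ)) ⬝ᵥ (Γ⁻¹ *ᵥ (y - O (Mdag θ)))))
    (hΦenh : Φenh = fun θ => (1/2) *
      ((y - O (Mappr θ) - O mε) ⬝ᵥ ((Γ + S)⁻¹ *ᵥ (y - O (Mappr θ) - O mε))))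
    (hid : Integrable Φdag μ) (hie : Integrable Φenh μ) :
    ∫ θ, |Φdag θ - Φenh θ| ∂μ ≤
      (Real.sqrt 2)⁻¹ *
        Real.sqrt (∫ θ,
          |(O (Mdag θ - Mappr θ - mε)) ⬝ᵥ (Γ⁻¹ *ᵥ (O (Mdag θ - Mappr θ - mε)))| ∂μ) *
        (Real.sqrt (∫ θ, |Φdag θ| ∂μ) + Ce * Real.sqrt (∫ θ, |Φenh θ| ∂μ)) +
      (1/2) * ∫ θ,
        |((y - O (Mappr θ) - O mε) ⬝ᵥ (Γ⁻¹ *ᵥ (y - O (Mappr θ) - O mε))) -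
          ((y - O (Mappr θ) - O mε) ⬝ᵥ ((Γ + S)⁻¹ *ᵥ (y - O (Mappr θ) - O mε)))| ∂μ := by
  have hma : Measurable (fun θ : X => y - O (Mdag θ)) :=
    measurable_const.sub (O.continuous.measurable.comp hMdag)
  have hmb : Measurable (fun θ : X => y - O (Mappr θ) - O mε) :=
    (measurable_const.sub (O.continuous.measurable.comp hMappr)).sub measurable_const
  have key := main_aux μ (fun θ => y - O (Mdag θ)) (fun θ => y - O (Mappr θ) - O mε)
    hma hmb Γ S hΓ hS Ce hCe Φdag Φenh hΦdag hΦenh hid hie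
  have hq : (fun θ => |(O (Mdag θ - Mappr θ - mε)) ⬝ᵥ (Γ⁻¹ *ᵥ (O (Mdag θ - Mappr θ - mε)))|)
      = fun θ => |((y - O (Mappr θ) - O mε) - (y - O (Mdag θ))) ⬝ᵥ
          (Γ⁻¹ *ᵥ ((y - O (Mappr θ) - O mε) - (y - O (Mdag θ))))| := by
    funext θ
    have hOd : O (Mdag θ - Mappr θ - mε) = (y - O (Mappr θ) - O mε) - (y - O (Mdag θ)) := by
      simp only [map_sub]
      abel
    rw [hOd]
  rw [hq]
  exact key
end

section
/- If the lifted best misfit Φ^† is in L¹_{μ_θ} and the joint misfit Φ^j is in L¹_{μ_θ⊗μ_δ}, then ‖Φ^† − Φ^j‖_{L¹_{μ_θ⊗μ_δ}} ≤ 2^{−1/2} · ( ∫∫ |O(δ^†(θ) − e(θ,w))|²_{Σ_η^{−1}} d(μ_θ⊗μ_δ)(θ,w) )^{1/2} · ( ‖Φ^j‖_{L¹_{μ_θ⊗μ_δ}}^{1/2} + ‖Φ^†‖_{L¹_{μ_θ}}^{1/2} ). Furthermore, ( ∫∫ |O(δ^†(θ) − e(θ,w))|²_{Σ_η^{−1}}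 d(μ_θ⊗μ_δ) )^{1/2} ≤ 2^{1/2} · ( ‖Φ^j‖_{L¹_{μ_θ⊗μ_δ}}^{1/2} + ‖Φ^†‖_{L¹_{μ_θ}}^{1/2} ). -/
open MeasureTheory Real Matrix

lemma myDotNonneg {n : ℕ} (x : Fin n → ℝ) : 0 ≤ x ⬝ᵥ x :=
  Finset.sum_nonneg fun _ _ => mul_self_nonneg _

lemma myDotCS {n : ℕ} (x y : Fin n → ℝ) : |x ⬝ᵥ y| ≤ √(x ⬝ᵥ x) * √(y ⬝ᵥ y) := by
  have h : ∀ a b : Fin n → ℝ, a ⬝ᵥ b ≤ √(a ⬝ᵥ a) * √(b ⬝ᵥ b) := by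
    intro a b
    simpa [dotProduct, pow_two] using Real.sum_mul_le_sqrt_mul_sqrt Finset.univ a b
  refine abs_le.2 ⟨?_, h x y⟩
  have := h (-x) y
  simp only [neg_dotProduct, dotProduct_neg, neg_neg] at this
  linarith

lemma mySqrtAMGM {x y : ℝ} (hx : 0 ≤ x) (hy : 0 ≤ y) : √x * √y ≤ (x + y) / 2 := by
  nlinarith [sq_nonneg (√x - √y), Real.sq_sqrt hx, Real.sq_sqrt hy]

lemma myAbsDotHalf {n : ℕ} (a b : Fin n → ℝ) : |a ⬝ᵥ b| ≤ (a ⬝ᵥ a + b ⬝ᵥ b) / 2 :=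
  (myDotCS a b).trans (mySqrtAMGM (myDotNonneg a) (myDotNonneg b))

lemma myDotSubExpand {n : ℕ} (a b : Fin n → ℝ) :
    (b - a) ⬝ᵥ (b - a) = a ⬝ᵥ a - 2*(a ⬝ᵥ b) + b ⬝ᵥ b := by
  simp only [sub_dotProduct, dotProduct_sub, dotProduct_comm b a]; ring

lemma myDotMixExpand {n : ℕ} (a b : Fin n → ℝ) :
    (b - a) ⬝ᵥ (b + a) = b ⬝ᵥ b - a ⬝ᵥ a := by
  simp only [sub_dotProduct, dotProduct_add, dotProduct_comm a b]; ring

open scoped MatrixOrder in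
lemma myRep {n : ℕ} {M : Matrix (Fin n) (Fin n) ℝ} (hM : M.PosSemidef) :
    ∃ S : Matrix (Fin n) (Fin n) ℝ, ∀ u v, u ⬝ᵥ (M *ᵥ v) = (S *ᵥ u) ⬝ᵥ (S *ᵥ v) := by
  obtain ⟨S, rfl⟩ := CStarAlgebra.nonneg_iff_eq_star_mul_self.mp hM.nonneg
  refine ⟨S, fun u v => ?_⟩
  rw [star_eq_conjTranspose, conjTranspose_eq_transpose_of_trivial, ← mulVec_mulVec,
    dotProduct_mulVec, ← mulVec_transpose, transpose_transpose]

lemma myIntCS {α : Type*} [MeasurableSpace α] {μ : Measure α} {f g : α → ℝ}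
    (hfm : AEStronglyMeasurable f μ) (hgm : AEStronglyMeasurable g μ)
    (hf0 : ∀ a, 0 ≤ f a) (hg0 : ∀ a, 0 ≤ g a)
    (hf2 : Integrable (fun a => f a ^ 2) μ) (hg2 : Integrable (fun a => g a ^ 2) μ) :
    ∫ a, f a * g a ∂μ ≤ √(∫ a, f a ^ 2 ∂μ) * √(∫ a, g a ^ 2 ∂μ) := by
  have hpq : Real.HolderConjugate 2 2 := ⟨by norm_num, by norm_num, by norm_num⟩
  have h2 : (ENNReal.ofReal (2:ℝ)) = 2 := by norm_num
  have hF : MemLp f (ENNReal.ofReal (2:ℝ)) μ := h2 ▸ ((memLp_two_iff_integrable_sq hfm).2 hf2)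
  have hG : MemLp g (ENNReal.ofReal (2:ℝ)) μ := h2 ▸ ((memLp_two_iff_integrable_sq hgm).2 hg2)
  have h := integral_mul_le_Lp_mul_Lq_of_nonneg hpq (Filter.Eventually.of_forall hf0)
    (Filter.Eventually.of_forall hg0) hF hG
  simp only [show (2:ℝ) = ((2:ℕ):ℝ) by norm_num, Real.rpow_natCast] at h
  rw [show (1:ℝ)/((2:ℕ):ℝ) = 1/2 by norm_num, ← Real.sqrt_eq_rpow, ← Real.sqrt_eq_rpow] at h
  exact h

set_option maxHeartbeats 1000000 in
theorem stmt10 {X W U : Type*} [MeasurableSpace X] [MeasurableSpace W]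
    [NormedAddCommGroup U] [NormedSpace ℝ U] [CompleteSpace U]
    [MeasurableSpace U] [BorelSpace U]
    (μθ : Measure X) [IsProbabilityMeasure μθ] (μδ : Measure W) [IsProbabilityMeasure μδ]
    {n : ℕ}
    (Mdag Mappr : X → U) (hMdag : Measurable Mdag) (hMappr : Measurable Mappr)
    (e : X × W → U) (he : Measurable e)
    (O : U →L[ℝ] (Fin n → ℝ)) (y : Fin n → ℝ)
    (Γ : Matrix (Fin n) (Fin n) ℝ) (hΓ : Γ.PosDef)
    (Φdag : X → ℝ) (Φjoint : X × W → ℝ)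
    (hΦdag : Φdag = fun θ => (1/2) * ((y - O (Mdag θ)) ⬝ᵥ (Γ⁻¹ *ᵥ (y - O (Mdag θ)))))
    (hΦjoint : Φjoint = fun p => (1/2) *
      ((y - O (Mappr p.1) - O (e p)) ⬝ᵥ (Γ⁻¹ *ᵥ (y - O (Mappr p.1) - O (e p)))))
    (hid : Integrable Φdag μθ) (hij : Integrable Φjoint (μθ.prod μδ)) :
    (∫ p, |Φdag p.1 - Φjoint p| ∂(μθ.prod μδ)) ≤
      (Real.sqrt 2)⁻¹ *
        Real.sqrt (∫ p, |(O (Mdag p.1 - Mappr p.1 - e p)) ⬝ᵥ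
          (Γ⁻¹ *ᵥ (O (Mdag p.1 - Mappr p.1 - e p)))| ∂(μθ.prod μδ)) *
        (Real.sqrt (∫ p, |Φjoint p| ∂(μθ.prod μδ)) + Real.sqrt (∫ θ, |Φdag θ| ∂μθ)) ∧
    Real.sqrt (∫ p, |(O (Mdag p.1 - Mappr p.1 - e p)) ⬝ᵥ
        (Γ⁻¹ *ᵥ (O (Mdag p.1 - Mappr p.1 - e p)))| ∂(μθ.prod μδ)) ≤
      Real.sqrt 2 *
        (Real.sqrt (∫ p, |Φjoint p| ∂(μθ.prod μδ)) + Real.sqrt (∫ θ, |Φdag θ| ∂μθ)) := by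
  obtain ⟨S, hS⟩ := myRep (hΓ.inv.posSemidef)
  set μ := μθ.prod μδ with hμdef
  -- basic continuity facts
  have hSc : Continuous fun v : Fin n → ℝ => S *ᵥ v := S.mulVecLin.continuous_of_finiteDimensional
  have hdotc : Continuous fun v : Fin n → ℝ => v ⬝ᵥ v := by
    show Continuous fun v : Fin n → ℝ => ∑ i, v i * v i
    exact continuous_finset_sum _ fun i _ => (continuous_apply i).mul (continuous_apply i)
  have hdotc2 : Continuous fun q : (Fin n → ℝ) × (Fin n → ℝ) => q.1 ⬝ᵥ q.2 := by
    show Continuous fun q : (Fin n → ℝ) × (Fin n → ℝ) => ∑ i, q.1 i * q.2 i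
    exact continuous_finset_sum _ fun i _ =>
      ((continuous_apply i).comp continuous_fst).mul ((continuous_apply i).comp continuous_snd)
  -- the vectors
  set a : X × W → (Fin n → ℝ) := fun p => S *ᵥ (y - O (Mdag p.1)) with hadef
  set b : X × W → (Fin n → ℝ) := fun p => S *ᵥ (y - O (Mappr p.1) - O (e p)) with hbdef
  have ham : Measurable a :=
    hSc.measurable.comp (measurable_const.sub (O.continuous.measurable.comp
      (hMdag.comp measurable_fst)))
  have hbm : Measurable b :=
    hSc.measurable.comp ((measurable_const.sub (O.continuous.measurable.comp
      (hMappr.comp measurable_fst))).sub (O.continuous.measurable.comp he))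
  -- pointwise identities
  have hA : ∀ p : X × W, Φdag p.1 = 1/2 * (a p ⬝ᵥ a p) := by
    intro p; rw [hΦdag]; simp only; rw [hS]
  have hB : ∀ p : X × W, Φjoint p = 1/2 * (b p ⬝ᵥ b p) := by
    intro p; rw [hΦjoint]; simp only; rw [hS]
  have hD : ∀ p : X × W, (O (Mdag p.1 - Mappr p.1 - e p)) ⬝ᵥ
      (Γ⁻¹ *ᵥ (O (Mdag p.1 - Mappr p.1 - e p))) = (b p - a p) ⬝ᵥ (b p - a p) := by
    intro p
    rw [hS]
    have h : S *ᵥ (O (Mdag p.1 - Mappr p.1 - e p)) = b p - a p := by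
      show S *ᵥ (O (Mdag p.1 - Mappr p.1 - e p)) =
        S *ᵥ (y - O (Mappr p.1) - O (e p)) - S *ᵥ (y - O (Mdag p.1))
      rw [← Matrix.mulVec_sub]
      simp only [map_sub]
      abel_nf
    rw [h]
  have hΦd0 : ∀ θ, 0 ≤ Φdag θ := by
    intro θ
    rw [hΦdag]; simp only; rw [hS]
    exact mul_nonneg (by norm_num) (myDotNonneg _)
  have hΦj0 : ∀ p, 0 ≤ Φjoint p := by
    intro p
    rw [hB p]
    exact mul_nonneg (by norm_num) (myDotNonneg _)
  -- measurability of scalar functions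
  have hΦdagm : Measurable Φdag := by
    rw [hΦdag]
    have hq : Continuous fun v : Fin n → ℝ => v ⬝ᵥ (Γ⁻¹ *ᵥ v) := by
      have : (fun v : Fin n → ℝ => v ⬝ᵥ (Γ⁻¹ *ᵥ v)) = fun v => (S *ᵥ v) ⬝ᵥ (S *ᵥ v) :=
        funext fun v => hS v v
      rw [this]; exact hdotc.comp hSc
    exact ((hq.measurable.comp (measurable_const.sub
      (O.continuous.measurable.comp hMdag)))).const_mul (1/2)
  have hqa_m : Measurable fun p => a p ⬝ᵥ a p := hdotc.measurable.comp ham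
  have hqb_m : Measurable fun p => b p ⬝ᵥ b p := hdotc.measurable.comp hbm
  have hqd_m : Measurable fun p => (b p - a p) ⬝ᵥ (b p - a p) :=
    hdotc.measurable.comp (hbm.sub ham)
  have hqab_m : Measurable fun p => a p ⬝ᵥ b p := hdotc2.measurable.comp (ham.prodMk hbm)
  -- integrability
  have hmap : μ.map Prod.fst = μθ := by rw [hμdef, Measure.map_fst_prod]; simp
  have hΦd' : Integrable (fun p : X × W => Φdag p.1) μ := by
    have h := (integrable_map_measure (hmap ▸ hΦdagm.aestronglyMeasurable :
      AEStronglyMeasurable Φdag (μ.map Prod.fst)) measurable_fst.aemeasurable).1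
      (hmap ▸ hid)
    exact h
  have hintfst : ∫ p : X × W, Φdag p.1 ∂μ = ∫ θ, Φdag θ ∂μθ := by
    have h := integral_map (measurable_fst (α := X) (β := W)).aemeasurable
      (hmap ▸ hΦdagm.aestronglyMeasurable : AEStronglyMeasurable Φdag (μ.map Prod.fst))
    rw [hmap] at h
    exact h.symm
  have haa : Integrable (fun p => a p ⬝ᵥ a p) μ := by
    refine ((hΦd'.const_mul 2).congr (ae_of_all _ fun p => ?_))
    show 2 * Φdag p.1 = a p ⬝ᵥ a p
    rw [hA p]; ring
  have hbb : Integrable (fun p => b p ⬝ᵥ b p) μ := by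
    refine ((hij.const_mul 2).congr (ae_of_all _ fun p => ?_))
    show 2 * Φjoint p = b p ⬝ᵥ b p
    rw [hB p]; ring
  have hdd : Integrable (fun p => (b p - a p) ⬝ᵥ (b p - a p)) μ := by
    refine ((haa.const_mul 2).add (hbb.const_mul 2)).mono'
      hqd_m.aestronglyMeasurable (ae_of_all _ fun p => ?_)
    simp only [Pi.add_apply]
    rw [Real.norm_eq_abs, abs_of_nonneg (myDotNonneg _), myDotSubExpand]
    have h := abs_le.1 (myAbsDotHalf (a p) (b p))
    linarith [h.1, h.2]
  have hab : Integrable (fun p => a p ⬝ᵥ b p) μ := by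
    refine ((haa.add hbb).div_const 2).mono'
      hqab_m.aestronglyMeasurable (ae_of_all _ fun p => ?_)
    simp only [Pi.add_apply]
    rw [Real.norm_eq_abs]
    exact myAbsDotHalf (a p) (b p)
  -- integrability of sqrt products
  have hsqprod : ∀ (F G : (X × W) → ℝ), Measurable F → Measurable G →
      (∀ p, 0 ≤ F p) → (∀ p, 0 ≤ G p) → Integrable F μ → Integrable G μ →
      Integrable (fun p => √(F p) * √(G p)) μ := by
    intro F G hFm hGm hF0 hG0 hFi hGi
    refine ((hFi.add hGi).div_const 2).mono'
      ((Real.continuous_sqrt.measurable.comp hFm).mul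
        (Real.continuous_sqrt.measurable.comp hGm)).aestronglyMeasurable
      (ae_of_all _ fun p => ?_)
    simp only [Pi.add_apply]
    rw [Real.norm_eq_abs, abs_of_nonneg (mul_nonneg (Real.sqrt_nonneg _) (Real.sqrt_nonneg _))]
    exact mySqrtAMGM (hF0 p) (hG0 p)
  have hsq1 := hsqprod _ _ hqd_m hqa_m (fun p => myDotNonneg _) (fun p => myDotNonneg _) hdd haa
  have hsq2 := hsqprod _ _ hqd_m hqb_m (fun p => myDotNonneg _) (fun p => myDotNonneg _) hdd hbb
  have hsq3 := hsqprod _ _ hqa_m hqb_m (fun p => myDotNonneg _) (fun p => myDotNonneg _) haa hbb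
  -- integral CS instances
  have hICS : ∀ (F G : (X × W) → ℝ), Measurable F → Measurable G →
      (∀ p, 0 ≤ F p) → (∀ p, 0 ≤ G p) → Integrable F μ → Integrable G μ →
      ∫ p, √(F p) * √(G p) ∂μ ≤ √(∫ p, F p ∂μ) * √(∫ p, G p ∂μ) := by
    intro F G hFm hGm hF0 hG0 hFi hGi
    have h := myIntCS (μ := μ) (f := fun p => √(F p)) (g := fun p => √(G p))
      ((Real.continuous_sqrt.measurable.comp hFm)).aestronglyMeasurable
      ((Real.continuous_sqrt.measurable.comp hGm)).aestronglyMeasurable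
      (fun p => Real.sqrt_nonneg _) (fun p => Real.sqrt_nonneg _)
      (by refine hFi.congr (ae_of_all _ fun p => ?_); exact (Real.sq_sqrt (hF0 p)).symm)
      (by refine hGi.congr (ae_of_all _ fun p => ?_); exact (Real.sq_sqrt (hG0 p)).symm)
    have e1 : ∫ p, √(F p) ^ 2 ∂μ = ∫ p, F p ∂μ :=
      integral_congr_ae (ae_of_all _ fun p => Real.sq_sqrt (hF0 p))
    have e2 : ∫ p, √(G p) ^ 2 ∂μ = ∫ p, G p ∂μ :=
      integral_congr_ae (ae_of_all _ fun p => Real.sq_sqrt (hG0 p))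
    rwa [e1, e2] at h
  -- integral abbreviations
  set Ia := ∫ p, a p ⬝ᵥ a p ∂μ with hIa
  set Ib := ∫ p, b p ⬝ᵥ b p ∂μ with hIb
  set Id := ∫ p, (b p - a p) ⬝ᵥ (b p - a p) ∂μ with hId
  have hIa0 : 0 ≤ Ia := integral_nonneg fun p => myDotNonneg _
  have hIb0 : 0 ≤ Ib := integral_nonneg fun p => myDotNonneg _
  -- relate to the goal's integrals
  have eD : ∫ p, |(O (Mdag p.1 - Mappr p.1 - e p)) ⬝ᵥ
      (Γ⁻¹ *ᵥ (O (Mdag p.1 - Mappr p.1 - e p)))| ∂μ = Id := by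
    refine integral_congr_ae (ae_of_all _ fun p => ?_)
    dsimp only
    rw [hD p, abs_of_nonneg (myDotNonneg _)]
  have eJ : Ib = 2 * ∫ p, |Φjoint p| ∂μ := by
    have h1 : ∫ p, |Φjoint p| ∂μ = ∫ p, Φjoint p ∂μ :=
      integral_congr_ae (ae_of_all _ fun p => abs_of_nonneg (hΦj0 p))
    have h2 : Ib = ∫ p, 2 * Φjoint p ∂μ := by
      refine integral_congr_ae (ae_of_all _ fun p => ?_)
      dsimp only
      rw [hB p]; ring
    rw [h1, h2, integral_const_mul]
  have eDg : Ia = 2 * ∫ θ, |Φdag θ| ∂μθ := by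
    have h1 : ∫ θ, |Φdag θ| ∂μθ = ∫ θ, Φdag θ ∂μθ :=
      integral_congr_ae (ae_of_all _ fun θ => abs_of_nonneg (hΦd0 θ))
    have h2 : Ia = ∫ p : X × W, 2 * Φdag p.1 ∂μ := by
      refine integral_congr_ae (ae_of_all _ fun p => ?_)
      dsimp only
      rw [hA p]; ring
    rw [h1, h2, integral_const_mul, hintfst]
  have h2s : Real.sqrt 2 * Real.sqrt 2 = 2 := Real.mul_self_sqrt (by norm_num)
  have hsqIa : √Ia = √2 * √(∫ θ, |Φdag θ| ∂μθ) := by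
    rw [eDg, Real.sqrt_mul (by norm_num : (0:ℝ) ≤ 2)]
  have hsqIb : √Ib = √2 * √(∫ p, |Φjoint p| ∂μ) := by
    rw [eJ, Real.sqrt_mul (by norm_num : (0:ℝ) ≤ 2)]
  -- part 1
  have part1 : (∫ p, |Φdag p.1 - Φjoint p| ∂μ) ≤
      (√2)⁻¹ * √Id * (√(∫ p, |Φjoint p| ∂μ) + √(∫ θ, |Φdag θ| ∂μθ)) := by
    have hkey : ∀ p : X × W, |Φdag p.1 - Φjoint p| ≤
        1/2 * (√((b p - a p) ⬝ᵥ (b p - a p)) * √(a p ⬝ᵥ a p) +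
          √((b p - a p) ⬝ᵥ (b p - a p)) * √(b p ⬝ᵥ b p)) := by
      intro p
      rw [hA p, hB p]
      have h1 : 1/2 * (a p ⬝ᵥ a p) - 1/2 * (b p ⬝ᵥ b p) =
          -(1/2) * ((b p - a p) ⬝ᵥ (b p + a p)) := by
        rw [myDotMixExpand]; ring
      rw [h1, abs_mul]
      have h2 : (b p - a p) ⬝ᵥ (b p + a p) =
          (b p - a p) ⬝ᵥ (b p) + (b p - a p) ⬝ᵥ (a p) := dotProduct_add _ _ _
      have h3 : |(b p - a p) ⬝ᵥ (b p + a p)| ≤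
          √((b p - a p) ⬝ᵥ (b p - a p)) * √(b p ⬝ᵥ b p) +
          √((b p - a p) ⬝ᵥ (b p - a p)) * √(a p ⬝ᵥ a p) := by
        rw [h2]
        exact (abs_add_le _ _).trans (add_le_add (myDotCS _ _) (myDotCS _ _))
      rw [show |(-(1/2) : ℝ)| = 1/2 by norm_num]
      linarith
    have hmono : (∫ p, |Φdag p.1 - Φjoint p| ∂μ) ≤
        ∫ p, 1/2 * (√((b p - a p) ⬝ᵥ (b p - a p)) * √(a p ⬝ᵥ a p) +
          √((b p - a p) ⬝ᵥ (b p - a p)) * √(b p ⬝ᵥ b p)) ∂μ := by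
      refine integral_mono_of_nonneg (ae_of_all _ fun p => abs_nonneg _)
        ((hsq1.add hsq2).const_mul (1/2)) (ae_of_all _ hkey)
    have hsplit : ∫ p, 1/2 * (√((b p - a p) ⬝ᵥ (b p - a p)) * √(a p ⬝ᵥ a p) +
          √((b p - a p) ⬝ᵥ (b p - a p)) * √(b p ⬝ᵥ b p)) ∂μ =
        1/2 * ((∫ p, √((b p - a p) ⬝ᵥ (b p - a p)) * √(a p ⬝ᵥ a p) ∂μ) +
          (∫ p, √((b p - a p) ⬝ᵥ (b p - a p)) * √(b p ⬝ᵥ b p) ∂μ)) := by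
      rw [integral_const_mul, integral_add hsq1 hsq2]
    have hcs1 := hICS _ _ hqd_m hqa_m (fun p => myDotNonneg _) (fun p => myDotNonneg _) hdd haa
    have hcs2 := hICS _ _ hqd_m hqb_m (fun p => myDotNonneg _) (fun p => myDotNonneg _) hdd hbb
    have hfinal : (∫ p, |Φdag p.1 - Φjoint p| ∂μ) ≤ 1/2 * (√Id * √Ia + √Id * √Ib) := by
      rw [hsplit] at hmono
      linarith [hcs1, hcs2]
    refine hfinal.trans (le_of_eq ?_)
    rw [hsqIa, hsqIb]
    have hinv : ((√2)⁻¹ : ℝ) = √2 / 2 := by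
      rw [eq_div_iff (by norm_num : (2:ℝ) ≠ 0), inv_mul_eq_div, div_eq_iff
        (by positivity : (√2:ℝ) ≠ 0)]
      linarith [h2s]
    rw [hinv]; ring
  -- part 2
  have part2 : √Id ≤ √2 * (√(∫ p, |Φjoint p| ∂μ) + √(∫ θ, |Φdag θ| ∂μθ)) := by
    have hexp : Id = Ia - 2 * (∫ p, a p ⬝ᵥ b p ∂μ) + Ib := by
      rw [hIa, hIb, hId]
      rw [show (fun p => (b p - a p) ⬝ᵥ (b p - a p)) =
        fun p => a p ⬝ᵥ a p - 2 * (a p ⬝ᵥ b p) + b p ⬝ᵥ b p from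
        funext fun p => myDotSubExpand (a p) (b p)]
      have i1 : Integrable (fun p => a p ⬝ᵥ a p - 2 * (a p ⬝ᵥ b p)) μ :=
        haa.sub (hab.const_mul 2)
      have i2 : Integrable (fun p => 2 * (a p ⬝ᵥ b p)) μ := hab.const_mul 2
      rw [integral_add i1 hbb, integral_sub haa i2, integral_const_mul]
    have habs : |∫ p, a p ⬝ᵥ b p ∂μ| ≤ √Ia * √Ib := by
      have h1 : |∫ p, a p ⬝ᵥ b p ∂μ| ≤ ∫ p, |a p ⬝ᵥ b p| ∂μ := by
        simpa [Real.norm_eq_abs] using norm_integral_le_integral_norm (fun p => a p ⬝ᵥ b p) (μ := μ)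
      have h2 : ∫ p, |a p ⬝ᵥ b p| ∂μ ≤ ∫ p, √(a p ⬝ᵥ a p) * √(b p ⬝ᵥ b p) ∂μ := by
        refine integral_mono_of_nonneg (ae_of_all _ fun p => abs_nonneg _) hsq3
          (ae_of_all _ fun p => myDotCS _ _)
      exact h1.trans (h2.trans (hICS _ _ hqa_m hqb_m (fun p => myDotNonneg _)
        (fun p => myDotNonneg _) haa hbb))
    have hIdle : Id ≤ (√Ia + √Ib) ^ 2 := by
      have := abs_le.1 habs
      nlinarith [Real.sq_sqrt hIa0, Real.sq_sqrt hIb0, this.1]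
    have : √Id ≤ √Ia + √Ib := by
      calc √Id ≤ √((√Ia + √Ib) ^ 2) := Real.sqrt_le_sqrt hIdle
        _ = √Ia + √Ib := Real.sqrt_sq (by positivity)
    rw [hsqIa, hsqIb] at this
    refine this.trans (le_of_eq (by ring))
  constructor
  · rw [eD]; exact part1
  · rw [eD]; exact part2
end
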